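/- arXiv:2510.21092 — 5 statements merged into one kernel-verified Lean document; each statement's English description precedes it below -/
import Mathlib

section
/- Let d ≥ 1 be an integer and 0 < γ < 1/(4d−1). Let N be a shifted geometric random variable with P(N = i) = (2d/(2d+1))^i · (1/(2d+1)) for i ≥ 0, let (Y_j)_{j≥1} be i.i.d. Bernoulli(γ/(γ+1)) independent of N, and let Y = Y_1 + ⋯ + Y_{2d+N}. Let (Y^{(n)}_j)_{n≥0, j≥1} be i.i.d. copies of Y on a probability space, define the Galton–Watson process X_0 = 1 and X_{n+1} = ∑_{j=1}^{X_n} Y^{(n)}_j, and let π = ∑_{n≥0} X_n ∈ ℕ ∪ {∞} be its total progeny. Then there exist a finite constant C_1 and a real s_1 > 1 such that P(π > K) ≤ C_1 s_1^{−K} for all K ∈ ℕ. -/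
open MeasureTheory ProbabilityTheory

open scoped ENNReal NNReal
set_option linter.unusedSectionVars false

namespace GWaux

variable {Ω : Type*} [MeasurableSpace Ω] {P : Measure Ω} [IsProbabilityMeasure P]
variable {ι : Type*} {W : ι → Ω → ℕ}

/-- σ-algebra generated by a subfamily of the `W i`. -/
def famSA (W : ι → Ω → ℕ) (A : Set ι) : MeasurableSpace Ω :=
  ⨆ i ∈ A, MeasurableSpace.comap (W i) inferInstance

lemma famSA_le (hWmeas : ∀ i, Measurable (W i)) (A : Set ι) :
    famSA W A ≤ ‹MeasurableSpace Ω› :=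
  iSup₂_le fun i _ => measurable_iff_comap_le.mp (hWmeas i)

lemma famSA_mono {A B : Set ι} (h : A ⊆ B) : famSA W A ≤ famSA W B :=
  biSup_mono h

lemma comap_le_famSA {A : Set ι} {i : ι} (hi : i ∈ A) :
    MeasurableSpace.comap (W i) inferInstance ≤ famSA W A :=
  le_iSup₂ (f := fun i _ => MeasurableSpace.comap (W i) inferInstance) i hi

lemma measurable_pow_W {i : ι} (u : ℝ≥0∞) :
    Measurable[MeasurableSpace.comap (W i) inferInstance] (fun ω => u ^ W i ω) :=
  (measurable_from_top (f := fun k : ℕ => u ^ k)).comp (Measurable.of_comap_le le_rfl)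

lemma lintegral_mul_indep (hW : iIndepFun W P)
    (hWmeas : ∀ i, Measurable (W i)) {A : Set ι} {p : ι} (hp : p ∉ A)
    {H G : Ω → ℝ≥0∞} (hH : Measurable[famSA W A] H)
    (hG : Measurable[MeasurableSpace.comap (W p) inferInstance] G) :
    ∫⁻ ω, H ω * G ω ∂P = (∫⁻ ω, H ω ∂P) * ∫⁻ ω, G ω ∂P := by
  have hind := indep_iSup_of_disjoint
    (m := fun i => MeasurableSpace.comap (W i) (inferInstance : MeasurableSpace ℕ))
    (fun i => measurable_iff_comap_le.mp (hWmeas i)) hW.iIndep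
    (S := A) (T := {p}) (Set.disjoint_singleton_right.mpr hp)
  have h2 : (⨆ i ∈ ({p} : Set ι), MeasurableSpace.comap (W i)
      (inferInstance : MeasurableSpace ℕ)) = MeasurableSpace.comap (W p) inferInstance := by
    simp
  rw [h2] at hind
  exact lintegral_mul_eq_lintegral_mul_lintegral_of_independent_measurableSpace
    (famSA_le hWmeas A) (measurable_iff_comap_le.mp (hWmeas p)) hind hH hG


lemma lintegral_mul_prod_pow (hW : iIndepFun W P)
    (hWmeas : ∀ i, Measurable (W i)) {A : Set ι} {e : ℕ → ι}
    (he : ∀ j, e j ∉ A) (heinj : Function.Injective e) (u : ℝ≥0∞) {H : Ω → ℝ≥0∞}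
    (hH : Measurable[famSA W A] H) {c : ℝ≥0∞} (hc : ∀ j, ∫⁻ ω, u ^ W (e j) ω ∂P = c) :
    ∀ m : ℕ, ∫⁻ ω, H ω * ∏ j ∈ Finset.range m, u ^ W (e j) ω ∂P
      = (∫⁻ ω, H ω ∂P) * c ^ m := by
  intro m
  induction m with
  | zero => simp
  | succ m ih =>
    have hA' : ∀ j < m, e j ∈ A ∪ e '' Set.Iio m := fun j hj => Or.inr ⟨j, hj, rfl⟩
    have hHm : Measurable[famSA W (A ∪ e '' Set.Iio m)]
        (fun ω => H ω * ∏ j ∈ Finset.range m, u ^ W (e j) ω) := by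
      refine Measurable.mul (hH.mono (famSA_mono Set.subset_union_left) le_rfl) ?_
      refine Finset.measurable_prod _ fun j hj => ?_
      exact (measurable_pow_W u).mono (comap_le_famSA (hA' j (Finset.mem_range.mp hj))) le_rfl
    have hpm : e m ∉ A ∪ e '' Set.Iio m := by
      rintro (h | ⟨j, hj, hje⟩)
      · exact he m h
      · exact absurd (heinj hje) (Nat.ne_of_lt hj)
    have key := lintegral_mul_indep hW hWmeas hpm hHm (measurable_pow_W (W := W) u (i := e m))
    calc ∫⁻ ω, H ω * ∏ j ∈ Finset.range (m+1), u ^ W (e j) ω ∂P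
        = ∫⁻ ω, (H ω * ∏ j ∈ Finset.range m, u ^ W (e j) ω) * u ^ W (e m) ω ∂P := by
          congr 1; funext ω; rw [Finset.prod_range_succ, mul_assoc]
      _ = (∫⁻ ω, H ω * ∏ j ∈ Finset.range m, u ^ W (e j) ω ∂P) * ∫⁻ ω, u ^ W (e m) ω ∂P := key
      _ = ((∫⁻ ω, H ω ∂P) * c ^ m) * c := by rw [ih, hc]
      _ = (∫⁻ ω, H ω ∂P) * c ^ (m + 1) := by rw [pow_succ, mul_assoc]

lemma lintegral_mul_pow_sum (hW : iIndepFun W P)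
    (hWmeas : ∀ i, Measurable (W i)) {A : Set ι} {e : ℕ → ι}
    (he : ∀ j, e j ∉ A) (heinj : Function.Injective e) (u : ℝ≥0∞) {H : Ω → ℝ≥0∞}
    (hH : Measurable[famSA W A] H) {R : Ω → ℕ} (hR : Measurable[famSA W A] R)
    {c : ℝ≥0∞} (hc : ∀ j, ∫⁻ ω, u ^ W (e j) ω ∂P = c) :
    ∫⁻ ω, H ω * u ^ (∑ j ∈ Finset.range (R ω), W (e j) ω) ∂P
      = ∫⁻ ω, H ω * c ^ R ω ∂P := by
  have hHm : Measurable H := hH.mono (famSA_le hWmeas A) le_rfl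
  have hRm : Measurable R := hR.mono (famSA_le hWmeas A) le_rfl
  have hprodm : ∀ m : ℕ, Measurable (fun ω => ∏ j ∈ Finset.range m, u ^ W (e j) ω) :=
    fun m => Finset.measurable_prod _ fun j _ =>
      (measurable_pow_W u).mono (measurable_iff_comap_le.mp (hWmeas (e j))) le_rfl
  have hset : ∀ m : ℕ, MeasurableSet {ω | R ω = m} := fun m => hRm (measurableSet_singleton m)
  have hsetF : ∀ m : ℕ, MeasurableSet[famSA W A] {ω | R ω = m} :=
    fun m => hR (measurableSet_singleton m)
  have lhs_eq : (fun ω => H ω * u ^ (∑ j ∈ Finset.range (R ω), W (e j) ω))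
      = fun ω => ∑' m : ℕ, ({ω' | R ω' = m}.indicator
          (fun ω' => H ω' * ∏ j ∈ Finset.range m, u ^ W (e j) ω') ω) := by
    funext ω
    rw [tsum_eq_single (R ω) (fun m hm => Set.indicator_of_notMem (by simpa using hm.symm) _),
      Set.indicator_of_mem (show ω ∈ {ω' | R ω' = R ω} from rfl), Finset.prod_pow_eq_pow_sum]
  have rhs_eq : (fun ω => H ω * c ^ R ω)
      = fun ω => ∑' m : ℕ, ({ω' | R ω' = m}.indicator (fun ω' => H ω' * c ^ m) ω) := by
    funext ω
    rw [tsum_eq_single (R ω) (fun m hm => Set.indicator_of_notMem (by simpa using hm.symm) _),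
      Set.indicator_of_mem (show ω ∈ {ω' | R ω' = R ω} from rfl)]
  have step : ∀ m : ℕ,
      ∫⁻ ω, ({ω' | R ω' = m}.indicator
          (fun ω' => H ω' * ∏ j ∈ Finset.range m, u ^ W (e j) ω') ω) ∂P
      = ∫⁻ ω, ({ω' | R ω' = m}.indicator (fun ω' => H ω' * c ^ m) ω) ∂P := by
    intro m
    have e1 : (fun ω => ({ω' | R ω' = m}.indicator
          (fun ω' => H ω' * ∏ j ∈ Finset.range m, u ^ W (e j) ω') ω))
        = fun ω => ({ω' | R ω' = m}.indicator H ω) * ∏ j ∈ Finset.range m, u ^ W (e j) ω := by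
      funext ω; by_cases h : R ω = m <;> simp [Set.indicator_apply, h]
    have e2 : (fun ω => ({ω' | R ω' = m}.indicator (fun ω' => H ω' * c ^ m) ω))
        = fun ω => ({ω' | R ω' = m}.indicator H ω) * c ^ m := by
      funext ω; by_cases h : R ω = m <;> simp [Set.indicator_apply, h]
    rw [e1, e2, lintegral_mul_prod_pow hW hWmeas he heinj u (hH.indicator (hsetF m)) hc m,
      lintegral_mul_const _ (hHm.indicator (hset m))]
  rw [lhs_eq, rhs_eq,
    lintegral_tsum (fun m => ((show Measurable (fun ω' => H ω' * ∏ j ∈ Finset.range m, u ^ W (e j) ω') from hHm.mul (hprodm m)).indicator (hset m)).aemeasurable),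
    lintegral_tsum (fun m => ((show Measurable (fun ω' => H ω' * c ^ m) from hHm.mul measurable_const).indicator (hset m)).aemeasurable)]
  exact tsum_congr step

lemma measurable_X (Z : ℕ → ℕ → Ω → ℕ) (X : ℕ → Ω → ℕ) (hX0 : ∀ ω, X 0 ω = 1)
    (hXsucc : ∀ n ω, X (n + 1) ω = ∑ j ∈ Finset.range (X n ω), Z n j ω) (n : ℕ) :
    Measurable[famSA (fun pr : ℕ × ℕ => Z pr.1 pr.2) {pr | pr.1 < n}] (X n) := by
  induction n with
  | zero =>
    have h : X 0 = fun _ => 1 := funext hX0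
    rw [h]; exact measurable_const
  | succ n ih =>
    refine @measurable_to_countable' ℕ Ω _ _
      (famSA (fun pr : ℕ × ℕ => Z pr.1 pr.2) {pr | pr.1 < n + 1}) (X (n+1)) fun k => ?_
    have hs : (X (n+1)) ⁻¹' {k} = ⋃ m : ℕ,
        ({ω | X n ω = m} ∩ {ω | ∑ j ∈ Finset.range m, Z n j ω = k}) := by
      ext ω
      simp only [Set.mem_preimage, Set.mem_singleton_iff, Set.mem_iUnion, Set.mem_inter_iff,
        Set.mem_setOf_eq, hXsucc n ω]
      constructor
      · intro h; exact ⟨X n ω, rfl, h⟩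
      · rintro ⟨m, hm, hsum⟩; rw [hm]; exact hsum
    rw [hs]
    refine MeasurableSet.iUnion fun m => MeasurableSet.inter ?_ ?_
    · exact (ih.mono (famSA_mono fun p hp => lt_trans hp (Nat.lt_succ_self n)) le_rfl)
        (measurableSet_singleton m)
    · have hm : Measurable[famSA (fun pr : ℕ × ℕ => Z pr.1 pr.2) {pr | pr.1 < n + 1}]
          fun ω => ∑ j ∈ Finset.range m, Z n j ω :=
        Finset.measurable_sum _ fun j _ => (Measurable.of_comap_le le_rfl).mono
          (comap_le_famSA (W := fun pr : ℕ × ℕ => Z pr.1 pr.2) (show ((n, j) : ℕ × ℕ) ∈ {pr : ℕ × ℕ | pr.1 < n + 1}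
            from Nat.lt_succ_self n)) le_rfl
      exact hm (measurableSet_singleton k)


lemma measurable_sum_range {R : Ω → ℕ} (hR : Measurable R)
    {V : ℕ → Ω → ℕ} (hV : ∀ j, Measurable (V j)) :
    Measurable fun ω => ∑ j ∈ Finset.range (R ω), V j ω := by
  refine measurable_to_countable' fun k => ?_
  have hs : (fun ω => ∑ j ∈ Finset.range (R ω), V j ω) ⁻¹' {k} = ⋃ m : ℕ,
      ({ω | R ω = m} ∩ {ω | ∑ j ∈ Finset.range m, V j ω = k}) := by
    ext ω
    simp only [Set.mem_preimage, Set.mem_singleton_iff, Set.mem_iUnion, Set.mem_inter_iff,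
      Set.mem_setOf_eq]
    constructor
    · intro h; exact ⟨R ω, rfl, h⟩
    · rintro ⟨m, hm, hsum⟩; rw [hm]; exact hsum
  rw [hs]
  exact MeasurableSet.iUnion fun m => (hR (measurableSet_singleton m)).inter
    ((Finset.measurable_sum _ fun j _ => hV j) (measurableSet_singleton k))

open Filter Topology in
lemma exists_good_t (d : ℕ) (p : ℝ) (hp0 : 0 < p) (hp : 4 * (d : ℝ) * p < 1) :
    ∃ t : ℝ, 1 < t ∧ 2 * (d : ℝ) * (p * (t - 1)) < 1 ∧
      (1 + p * (t - 1)) ^ (2 * d) < t * ((2 * (d : ℝ) + 1) - 2 * d * (1 + p * (t - 1))) := by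
  set q : ℝ → ℝ := fun t => 1 + p * (t - 1) with hqdef
  set g : ℝ → ℝ := fun t => t * ((2 * (d : ℝ) + 1) - 2 * d * q t) - q t ^ (2 * d) with hgdef
  have hq1 : q 1 = 1 := by simp [hqdef]
  have hg1 : g 1 = 0 := by simp [hgdef, hq1]
  have hqd : HasDerivAt q p 1 := by
    simpa [hqdef] using (((hasDerivAt_id (1 : ℝ)).sub_const 1).const_mul p).const_add 1
  have hgd : HasDerivAt g (1 - 4 * d * p) 1 := by
    have h1 : HasDerivAt (fun t => (2 * (d : ℝ) + 1) - 2 * d * q t) (-(2 * d * p)) 1 := by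
      simpa using (hqd.const_mul (2 * (d : ℝ))).const_sub (2 * (d : ℝ) + 1)
    have h2 := (hasDerivAt_id (1 : ℝ)).mul h1
    have h3 := hqd.pow (2 * d)
    have h4 := h2.sub h3
    refine h4.congr_deriv ?_
    rw [hq1, id_eq]
    have h2d : (1 : ℕ) ≤ 2 * d ∨ d = 0 := by omega
    rcases h2d with h2d | h2d
    · rw [one_pow]; push_cast; ring
    · subst h2d; push_cast; ring
  have hpos : (0 : ℝ) < 1 - 4 * d * p := by linarith
  have hslope := hasDerivAt_iff_tendsto_slope.mp hgd
  have ev1 : ∀ᶠ t in 𝓝[≠] (1 : ℝ), 0 < slope g 1 t :=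
    hslope.eventually (eventually_gt_nhds hpos)
  have hc : ContinuousAt (fun t : ℝ => 2 * (d : ℝ) * (p * (t - 1))) 1 := by fun_prop
  have ev2 : ∀ᶠ t in 𝓝 (1 : ℝ), 2 * (d : ℝ) * (p * (t - 1)) < 1 := by
    have h0 : 2 * (d : ℝ) * (p * ((1 : ℝ) - 1)) < 1 := by norm_num
    exact hc.eventually (eventually_lt_nhds (by simpa using h0))
  have ev3 : ∀ᶠ t in 𝓝[>] (1 : ℝ), 1 < t :=
    eventually_nhdsWithin_of_forall fun x hx => hx
  have hcomb := ev3.and ((ev2.filter_mono nhdsWithin_le_nhds).and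
    (ev1.filter_mono (nhdsWithin_mono 1 fun x hx => by simp [ne_of_gt (Set.mem_Ioi.mp hx)])))
  obtain ⟨t, ht1, ht2, hst⟩ := hcomb.exists
  refine ⟨t, ht1, ht2, ?_⟩
  have htne : t - 1 ≠ 0 := by linarith
  have hgt : 0 < g t := by
    have hs : slope g 1 t = g t / (t - 1) := by rw [slope_def_field, hg1, sub_zero]
    rw [hs] at hst
    have := mul_pos hst (show (0:ℝ) < t - 1 by linarith)
    rwa [div_mul_cancel₀ _ htne] at this
  have : 0 < t * ((2 * (d : ℝ) + 1) - 2 * d * q t) - q t ^ (2 * d) := hgt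
  simp only [hqdef] at this
  linarith

end GWaux


open GWaux in
/-- Let `0 < γ < 1/(4d−1)`, let `Y` be the compound offspring variable
built from a shifted geometric `N` and i.i.d. Bernoulli(`γ/(γ+1)`) variables `(B j)`
independent of `N`, and let `(Z n j)` be i.i.d. copies of `Y` driving the Galton–Watson
process `X 0 = 1`, `X (n+1) = ∑_{j < X n} Z n j`, with total progeny `π = ∑ₙ X n ∈ ℕ∞`.
Then there exist `C₁ < ∞` and `s₁ > 1` with `P(π > K) ≤ C₁ s₁^{−K}` for all `K ∈ ℕ`. -/
theorem progeny_exponential_decay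
    {Ω : Type*} [MeasurableSpace Ω] (P : Measure Ω) [IsProbabilityMeasure P]
    (d : ℕ) (hd : 1 ≤ d) (γ : ℝ) (hγ0 : 0 < γ) (hγ : γ < 1 / (4 * d - 1))
    (N : Ω → ℕ) (hNmeas : Measurable N)
    (hN : ∀ i : ℕ, P {ω | N ω = i} =
      ENNReal.ofReal ((2 * d / (2 * d + 1) : ℝ) ^ i * (1 / (2 * d + 1))))
    (B : ℕ → Ω → ℕ) (hBmeas : ∀ j, Measurable (B j))
    (hBval : ∀ j ω, B j ω ≤ 1)
    (hB : ∀ j, P {ω | B j ω = 1} = ENNReal.ofReal (γ / (γ + 1)))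
    (hindepNB : iIndepFun
      (fun o : Option ℕ => Option.elim o N B) P)
    -- `Z n j` are i.i.d. copies of `Y = ∑_{j < 2d+N} B j`
    (Z : ℕ → ℕ → Ω → ℕ) (hZmeas : ∀ n j, Measurable (Z n j))
    (hZindep : iIndepFun
      (fun p : ℕ × ℕ => Z p.1 p.2) P)
    (hZdist : ∀ n j, Measure.map (Z n j) P
      = Measure.map (fun ω => ∑ j ∈ Finset.range (2 * d + N ω), B j ω) P)
    -- the Galton–Watson process and its total progeny
    (X : ℕ → Ω → ℕ) (hX0 : ∀ ω, X 0 ω = 1)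
    (hXsucc : ∀ n ω, X (n + 1) ω = ∑ j ∈ Finset.range (X n ω), Z n j ω)
    (π : Ω → ℕ∞) (hπ : ∀ ω, π ω = ∑' n, (X n ω : ℕ∞)) :
    ∃ (C₁ : ℝ) (s₁ : ℝ), 1 < s₁ ∧
      ∀ K : ℕ, (P {ω | (K : ℕ∞) < π ω}).toReal ≤ C₁ * s₁ ^ (-(K : ℝ)) := by
  -- basic real facts
  have hdR : (1 : ℝ) ≤ d := by exact_mod_cast hd
  set p : ℝ := γ / (γ + 1) with hpdef
  have hγ1 : (0 : ℝ) < γ + 1 := by linarith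
  have hp0 : 0 < p := div_pos hγ0 hγ1
  have hp1 : p < 1 := by
    rw [hpdef, div_lt_one hγ1]; linarith
  have h4dp : 4 * (d : ℝ) * p < 1 := by
    have h41 : (0 : ℝ) < 4 * (d : ℝ) - 1 := by linarith
    have hγ' : γ * (4 * (d : ℝ) - 1) < 1 := by
      have h2 := hγ; rw [lt_div_iff₀ h41] at h2; exact h2
    rw [hpdef, ← mul_div_assoc, div_lt_one hγ1]
    nlinarith
  -- Bernoulli integral
  set pE : ℝ≥0∞ := ENNReal.ofReal p with hpEdef
  have hpE1 : pE ≤ 1 := by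
    rw [hpEdef, ← ENNReal.ofReal_one]
    exact ENNReal.ofReal_le_ofReal hp1.le
  have hBint : ∀ (j : ℕ) (u : ℝ≥0∞), ∫⁻ ω, u ^ B j ω ∂P = u * pE + (1 - pE) := by
    intro j u
    have hs : MeasurableSet {ω | B j ω = 1} := hBmeas j (measurableSet_singleton 1)
    have hsplit : (fun ω => u ^ B j ω) = fun ω =>
        ({ω' | B j ω' = 1}.indicator (fun _ => u) ω
          + ({ω' | B j ω' = 1}ᶜ.indicator (fun _ => (1:ℝ≥0∞)) ω)) := by
      funext ω
      by_cases h : B j ω = 1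
      · simp [Set.indicator_apply, Set.mem_setOf_eq, h]
      · have h0 : B j ω = 0 := by have := hBval j ω; omega
        simp [Set.indicator_apply, Set.mem_setOf_eq, h, h0]
    rw [hsplit, lintegral_add_left ((measurable_const (a := u)).indicator hs),
      lintegral_indicator_const hs, lintegral_indicator_const hs.compl,
      prob_compl_eq_one_sub hs, hB j, one_mul]
  -- the offspring generating function
  set FY : ℝ≥0∞ → ℝ≥0∞ :=
    fun u => ∫⁻ ω, u ^ (∑ j ∈ Finset.range (2 * d + N ω), B j ω) ∂P with hFYdef
  have hFYmono : Monotone FY := by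
    intro u v huv
    exact lintegral_mono fun ω => pow_le_pow_left' huv _
  have hFYone : ∀ u : ℝ≥0∞, 1 ≤ u → 1 ≤ FY u := by
    intro u hu
    calc (1:ℝ≥0∞) = ∫⁻ _, 1 ∂P := by simp
    _ ≤ FY u := lintegral_mono fun ω => one_le_pow_of_one_le' hu _
  have hWmeasNB : ∀ o : Option ℕ, Measurable (Option.elim o N B) := by
    rintro (_ | j); exacts [hNmeas, hBmeas j]
  have hYsum : ∀ u : ℝ≥0∞, FY u
      = ∑' i : ℕ, (u * pE + (1 - pE)) ^ (2 * d + i) * P {ω | N ω = i} := by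
    intro u
    have hRmeasF : Measurable[famSA (fun o : Option ℕ => Option.elim o N B) {none}]
        (fun ω => 2 * d + N ω) :=
      ((measurable_from_top (f := fun k : ℕ => 2 * d + k)).comp
        (Measurable.of_comap_le le_rfl)).mono
        (comap_le_famSA (W := fun o : Option ℕ => Option.elim o N B)
          (Set.mem_singleton none)) le_rfl
    have h1 : FY u = ∫⁻ ω, (u * pE + (1 - pE)) ^ (2 * d + N ω) ∂P := by
      have h2 := lintegral_mul_pow_sum (P := P) hindepNB hWmeasNB
        (A := {none}) (e := some) (fun j => by simp) (Option.some_injective ℕ) u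
        (H := fun _ => 1) measurable_const (R := fun ω => 2 * d + N ω) hRmeasF
        (c := u * pE + (1 - pE)) (fun j => hBint j u)
      simpa [hFYdef, Option.elim] using h2
    calc FY u = ∫⁻ k, (u * pE + (1 - pE)) ^ (2 * d + k) ∂(Measure.map N P) := by
          rw [h1, lintegral_map measurable_from_top hNmeas]
      _ = ∑' i : ℕ, (u * pE + (1 - pE)) ^ (2 * d + i) * (Measure.map N P) {i} :=
          lintegral_countable' _
      _ = ∑' i : ℕ, (u * pE + (1 - pE)) ^ (2 * d + i) * P {ω | N ω = i} := by
          refine tsum_congr fun i => ?_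
          rw [Measure.map_apply hNmeas (measurableSet_singleton i)]
          rfl
  have hYmeas : Measurable (fun ω => ∑ j ∈ Finset.range (2 * d + N ω), B j ω) :=
    measurable_sum_range ((measurable_from_top (f := fun k : ℕ => 2 * d + k)).comp hNmeas) hBmeas
  have hZint : ∀ (n j : ℕ) (u : ℝ≥0∞), ∫⁻ ω, u ^ Z n j ω ∂P = FY u := by
    intro n j u
    have h1 : ∫⁻ ω, u ^ Z n j ω ∂P = ∫⁻ k, u ^ k ∂(Measure.map (Z n j) P) :=
      (lintegral_map measurable_from_top (hZmeas n j)).symm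
    rw [h1, hZdist n j, lintegral_map measurable_from_top hYmeas]
  -- choose the tilt point t
  obtain ⟨t, ht1, ht2, ht3⟩ := GWaux.exists_good_t d p hp0 h4dp
  set qr : ℝ := 1 + p * (t - 1) with hqrdef
  have hqr1 : 1 ≤ qr := by nlinarith
  have hqrpos : 0 < qr := by linarith
  have htpos : (0:ℝ) < t := by linarith
  have hq_ofReal : (ENNReal.ofReal t) * pE + (1 - pE) = ENNReal.ofReal qr := by
    have e1 : (1:ℝ≥0∞) - pE = ENNReal.ofReal (1 - p) := by
      rw [hpEdef, ENNReal.ofReal_sub 1 hp0.le, ENNReal.ofReal_one]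
    have e2 : ENNReal.ofReal t * pE = ENNReal.ofReal (t * p) := by
      rw [hpEdef, ENNReal.ofReal_mul htpos.le]
    rw [e2, e1, ← ENNReal.ofReal_add (by positivity) (by linarith)]
    congr 1; rw [hqrdef]; ring
  set r : ℝ := 2 * (d:ℝ) / (2 * (d:ℝ) + 1) with hrdef
  have hdpos : (0:ℝ) < 2 * (d:ℝ) + 1 := by linarith
  have hrq : r * qr < 1 := by
    rw [hrdef, div_mul_eq_mul_div, div_lt_one hdpos]
    nlinarith
  have hrqnn : 0 ≤ r * qr := by positivity
  set Frt : ℝ := (qr ^ (2*d) * (1/(2*(d:ℝ)+1))) * (1 - r * qr)⁻¹ with hFrtdef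
  have hFYt : FY (ENNReal.ofReal t) = ENNReal.ofReal Frt := by
    rw [hYsum, hq_ofReal]
    have hterm : ∀ i:ℕ, (ENNReal.ofReal qr) ^ (2*d+i) * P {ω | N ω = i}
        = ENNReal.ofReal ((qr^(2*d) * (1/(2*(d:ℝ)+1))) * (r*qr)^i) := by
      intro i
      rw [hN i, ← ENNReal.ofReal_pow hqrpos.le, ← ENNReal.ofReal_mul (by positivity)]
      congr 1
      rw [pow_add, mul_pow]; ring
    rw [tsum_congr hterm, ← ENNReal.ofReal_tsum_of_nonneg (fun i => by positivity)
      ((summable_geometric_of_lt_one hrqnn hrq).mul_left _)]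
    congr 1
    rw [tsum_mul_left, tsum_geometric_of_lt_one hrqnn hrq, hFrtdef]
  have hFrt_ge1 : 1 ≤ Frt := by
    have h1 : (1:ℝ≥0∞) ≤ FY (ENNReal.ofReal t) :=
      hFYone _ (ENNReal.one_le_ofReal.mpr (by linarith))
    rw [hFYt] at h1
    exact ENNReal.one_le_ofReal.mp h1
  have hDpos : 0 < (2*(d:ℝ)+1) - 2*d*qr := by
    have h2 := hrq
    rw [hrdef, div_mul_eq_mul_div, div_lt_one hdpos] at h2
    linarith
  have hFrt_lt : Frt < t := by
    have hD : (1 - r * qr) = ((2*(d:ℝ)+1) - 2*d*qr) / (2*(d:ℝ)+1) := by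
      rw [hrdef]; field_simp
    have hFrt_eq : Frt = qr^(2*d) / ((2*(d:ℝ)+1) - 2*d*qr) := by
      rw [hFrtdef, hD]
      field_simp
    rw [hFrt_eq, div_lt_iff₀ hDpos]
    exact ht3
  set lam : ℝ := t / Frt with hlamdef
  have hFrtpos : (0:ℝ) < Frt := by linarith
  have hlam1 : 1 < lam := (one_lt_div hFrtpos).mpr hFrt_lt
  have hlampos : (0:ℝ) < lam := by linarith
  have hlam_le : lam ≤ t := div_le_self htpos.le hFrt_ge1
  have hlamFrt : lam * Frt = t := div_mul_cancel₀ _ (ne_of_gt hFrtpos)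
  set Lam : ℝ≥0∞ := ENNReal.ofReal lam with hLamdef
  set Tt : ℝ≥0∞ := ENNReal.ofReal t with hTtdef
  have hΛ1 : 1 ≤ Lam := ENNReal.one_le_ofReal.mpr hlam1.le
  have hΛTt : Lam ≤ Tt := ENNReal.ofReal_le_ofReal hlam_le
  have h1Tt : 1 ≤ Tt := ENNReal.one_le_ofReal.mpr (by linarith)
  have hΛ0 : Lam ≠ 0 := (ENNReal.ofReal_pos.mpr hlampos).ne'
  have hΛtop : Lam ≠ ⊤ := ENNReal.ofReal_ne_top
  have hkey : ∀ u : ℝ≥0∞, 1 ≤ u → u ≤ Tt → (1 ≤ Lam * FY u ∧ Lam * FY u ≤ Tt) := by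
    intro u hu1 hu2
    refine ⟨?_, ?_⟩
    · calc (1:ℝ≥0∞) = 1 * 1 := (one_mul 1).symm
        _ ≤ Lam * FY u := mul_le_mul' hΛ1 (hFYone u hu1)
    · calc Lam * FY u ≤ Lam * FY Tt := mul_le_mul_right (hFYmono hu2) Lam
        _ = ENNReal.ofReal lam * ENNReal.ofReal Frt := by rw [hTtdef, hFYt, hLamdef]
        _ = ENNReal.ofReal (lam * Frt) := (ENNReal.ofReal_mul hlampos.le).symm
        _ = Tt := by rw [hlamFrt, hTtdef]
  -- the Galton–Watson recursion
  set T : ℕ → Ω → ℕ := fun n ω => ∑ k ∈ Finset.range n, X k ω with hTdef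
  have hXF : ∀ n, Measurable[famSA (fun pr : ℕ × ℕ => Z pr.1 pr.2) {pr | pr.1 < n}] (X n) :=
    measurable_X Z X hX0 hXsucc
  have hTF : ∀ n, Measurable[famSA (fun pr : ℕ × ℕ => Z pr.1 pr.2) {pr | pr.1 < n}] (T n) := by
    intro n
    refine Finset.measurable_sum _ fun k hk => ?_
    exact (hXF k).mono (famSA_mono fun pr hpr =>
      lt_trans hpr (Finset.mem_range.mp hk)) le_rfl
  have hZWmeas : ∀ pr : ℕ × ℕ, Measurable ((fun pr : ℕ×ℕ => Z pr.1 pr.2) pr) :=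
    fun pr => hZmeas pr.1 pr.2
  have hTmeas : ∀ n, Measurable (T n) := fun n => (hTF n).mono (famSA_le hZWmeas _) le_rfl
  have hrec : ∀ (n : ℕ) (u : ℝ≥0∞),
      ∫⁻ ω, Lam ^ T (n+1) ω * u ^ X (n+1) ω ∂P
        = ∫⁻ ω, Lam ^ T n ω * (Lam * FY u) ^ X n ω ∂P := by
    intro n u
    have hHm : Measurable[famSA (fun pr : ℕ × ℕ => Z pr.1 pr.2) {pr | pr.1 < n}]
        (fun ω => Lam ^ T n ω * Lam ^ X n ω) :=
      ((measurable_from_top (f := fun k : ℕ => Lam ^ k)).comp (hTF n)).mul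
        ((measurable_from_top (f := fun k : ℕ => Lam ^ k)).comp (hXF n))
    have heq : (fun ω => Lam ^ T (n+1) ω * u ^ X (n+1) ω)
        = fun ω => (Lam ^ T n ω * Lam ^ X n ω) * u ^ (∑ j ∈ Finset.range (X n ω), Z n j ω) := by
      funext ω
      rw [hXsucc n ω]
      simp only [hTdef]
      rw [Finset.sum_range_succ, pow_add]
    have h2 := lintegral_mul_pow_sum (P := P) hZindep hZWmeas
      (A := {pr : ℕ × ℕ | pr.1 < n}) (e := fun j => (n, j))
      (fun j h => lt_irrefl n h) (fun a b h => congrArg Prod.snd h) u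
      hHm (hXF n) (fun j => hZint n j u)
    calc ∫⁻ ω, Lam ^ T (n+1) ω * u ^ X (n+1) ω ∂P
        = ∫⁻ ω, (Lam ^ T n ω * Lam ^ X n ω)
            * u ^ (∑ j ∈ Finset.range (X n ω), Z n j ω) ∂P := by rw [heq]
      _ = ∫⁻ ω, (Lam ^ T n ω * Lam ^ X n ω) * (FY u) ^ X n ω ∂P := h2
      _ = ∫⁻ ω, Lam ^ T n ω * (Lam * FY u) ^ X n ω ∂P := by
          refine lintegral_congr fun ω => ?_
          rw [mul_pow, mul_assoc]
  have hM : ∀ n (u : ℝ≥0∞), 1 ≤ u → u ≤ Tt → ∫⁻ ω, Lam ^ T n ω * u ^ X n ω ∂P ≤ Tt := by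
    intro n
    induction n with
    | zero =>
      intro u hu1 hu2
      have heq0 : (fun ω => Lam ^ T 0 ω * u ^ X 0 ω) = fun _ => u := by
        funext ω
        simp [hTdef, hX0 ω]
      rw [heq0, lintegral_const, measure_univ, mul_one]
      exact hu2
    | succ n ih =>
      intro u hu1 hu2
      rw [hrec n u]
      exact ih _ (hkey u hu1 hu2).1 (hkey u hu1 hu2).2
  have hTbound : ∀ n, ∫⁻ ω, Lam ^ T n ω ∂P ≤ Tt := by
    intro n
    cases n with
    | zero =>
      have heq0 : (fun ω => Lam ^ T 0 ω) = fun _ => (1:ℝ≥0∞) := by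
        funext ω; simp [hTdef]
      rw [heq0, lintegral_const, measure_univ, mul_one]
      exact h1Tt
    | succ n =>
      refine le_trans (le_of_eq (lintegral_congr fun ω => ?_)) (hM n Lam hΛ1 hΛTt)
      simp only [hTdef]
      rw [Finset.sum_range_succ, pow_add]
  -- conclusion
  refine ⟨t, lam, hlam1, fun K => ?_⟩
  have hsub1 : {ω | (K:ℕ∞) < π ω} ⊆ ⋃ n, {ω | K < T n ω} := by
    intro ω hω
    by_contra hcon
    simp only [Set.mem_iUnion, Set.mem_setOf_eq, not_exists, not_lt] at hcon
    have hle : π ω ≤ (K:ℕ∞) := by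
      rw [hπ ω]
      refine tsum_le_of_sum_le' zero_le fun s => ?_
      obtain ⟨n, hs⟩ := s.exists_nat_subset_range
      calc ∑ i ∈ s, ((X i ω : ℕ∞)) ≤ ∑ i ∈ Finset.range n, (X i ω : ℕ∞) :=
            Finset.sum_le_sum_of_subset hs
        _ = ((T n ω : ℕ) : ℕ∞) := by
            simp only [hTdef]
            exact (Nat.cast_sum _ _).symm
        _ ≤ (K:ℕ∞) := by exact_mod_cast hcon n
    exact absurd (show (K:ℕ∞) < π ω from hω) (not_lt.mpr hle)
  have hmono : Monotone fun n => {ω | K < T n ω} := by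
    intro a b hab ω hω
    have hω' : K < T a ω := hω
    show K < T b ω
    refine lt_of_lt_of_le hω' ?_
    simp only [hTdef]
    exact Finset.sum_le_sum_of_subset (Finset.range_subset_range.mpr hab)
  have hbound : ∀ n, P {ω | K < T n ω} ≤ Tt / Lam ^ (K+1) := by
    intro n
    have hsub2 : {ω | K < T n ω} ⊆ {ω | Lam ^ (K+1) ≤ (fun ω => Lam ^ T n ω) ω} := by
      intro ω hω
      exact pow_le_pow_right₀ hΛ1 hω
    have hmar := mul_meas_ge_le_lintegral₀ (μ := P)
      (((measurable_from_top (f := fun k:ℕ => Lam ^ k)).comp (hTmeas n)).aemeasurable)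
      (Lam ^ (K+1))
    have h3 : Lam ^ (K+1) * P {ω | K < T n ω} ≤ Tt :=
      le_trans (mul_le_mul_right (measure_mono hsub2) _) (le_trans hmar (hTbound n))
    rw [ENNReal.le_div_iff_mul_le (Or.inl (pow_ne_zero _ hΛ0))
      (Or.inl (ENNReal.pow_ne_top hΛtop)), mul_comm]
    exact h3
  have hfinal : P {ω | (K:ℕ∞) < π ω} ≤ Tt / Lam ^ (K+1) := by
    refine le_trans (measure_mono hsub1) ?_
    rw [hmono.measure_iUnion]
    exact iSup_le hbound
  have hval : Tt / Lam ^ (K+1) = ENNReal.ofReal (t / lam ^ (K+1)) := by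
    rw [hLamdef, hTtdef, ← ENNReal.ofReal_pow hlampos.le,
      ENNReal.ofReal_div_of_pos (pow_pos hlampos _)]
  rw [hval] at hfinal
  have htoReal := ENNReal.toReal_le_of_le_ofReal (by positivity) hfinal
  refine le_trans htoReal ?_
  rw [Real.rpow_neg hlampos.le, Real.rpow_natCast, ← div_eq_mul_inv]
  exact div_le_div_of_nonneg_left htpos.le (pow_pos hlampos K)
    (pow_le_pow_right₀ hlam1.le (Nat.le_succ K))
end

section
/- Let ξ be an ℕ-valued random variable, let (ξ^{(n)}_j)_{n≥0, j≥1} be i.i.d. copies of ξ on a probability space, define the Galton–Watson process X_0 = 1 and X_{n+1} = ∑_{j=1}^{X_n} ξ^{(n)}_j, and let π = ∑_{n≥0} X_n ∈ ℕ ∪ {∞} be its total progeny. Then for every s ∈ [0,1), the generating function F(s) := E(s^π · 1{π < ∞}) satisfies the functional equation F(s) = s · G(F(s)), where G(t) = E(t^ξ) is the probability-generating function of the offspring distribution. -/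
open MeasureTheory ProbabilityTheory

open Filter Topology
open scoped ENNReal NNReal

section GWAux

variable {Ω : Type*} [MeasurableSpace Ω] {P : Measure Ω} [IsProbabilityMeasure P]

/-- σ-algebra generated by the variables `Z p` for `p` in a set of indices. -/
def gwSigma (Z : ℕ → ℕ → Ω → ℕ) (S : Set (ℕ × ℕ)) : MeasurableSpace Ω :=
  ⨆ p ∈ S, MeasurableSpace.comap (Z p.1 p.2) inferInstance

lemma gwSigma_le {Z : ℕ → ℕ → Ω → ℕ} (hZmeas : ∀ n j, Measurable (Z n j)) (S : Set (ℕ × ℕ)) :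
    gwSigma Z S ≤ ‹MeasurableSpace Ω› :=
  iSup₂_le fun p _ => (hZmeas p.1 p.2).comap_le

lemma gwSigma_mono {Z : ℕ → ℕ → Ω → ℕ} {S T : Set (ℕ × ℕ)} (h : S ⊆ T) :
    gwSigma Z S ≤ gwSigma Z T :=
  iSup_le fun p => iSup_le fun hp => le_iSup₂ (f := fun p (_ : p ∈ T) => MeasurableSpace.comap (Z p.1 p.2) inferInstance) p (h hp)

lemma measurable_Z_gwSigma {Z : ℕ → ℕ → Ω → ℕ} {S : Set (ℕ × ℕ)} {n j : ℕ} (h : (n, j) ∈ S) :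
    Measurable[gwSigma Z S] (Z n j) := by
  rw [measurable_iff_comap_le]
  exact le_iSup₂ (f := fun p (_ : p ∈ S) => MeasurableSpace.comap (Z p.1 p.2) inferInstance) (n, j) h

set_option maxHeartbeats 1000000 in
lemma gw_indep' {Z : ℕ → ℕ → Ω → ℕ} (hZmeas : ∀ n j, Measurable (Z n j))
    (hZindep : iIndepFun (fun p : ℕ × ℕ => Z p.1 p.2) P)
    {S T : Set (ℕ × ℕ)} (hST : Disjoint S T) :
    Indep (gwSigma Z S) (gwSigma Z T) P := by
  have := indep_iSup_of_disjoint (m := fun p : ℕ × ℕ => MeasurableSpace.comap (Z p.1 p.2) inferInstance)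
    (fun p => (hZmeas p.1 p.2).comap_le) hZindep.iIndep hST
  exact this

lemma X_measurable_gwSigma {Z : ℕ → ℕ → Ω → ℕ} {X : ℕ → Ω → ℕ}
    (hX0 : ∀ ω, X 0 ω = 1)
    (hXsucc : ∀ n ω, X (n + 1) ω = ∑ j ∈ Finset.range (X n ω), Z n j ω) :
    ∀ n, Measurable[gwSigma Z {q : ℕ × ℕ | q.1 < n}] (X n) := by
  intro n
  induction n with
  | zero =>
    have : X 0 = fun _ => 1 := funext hX0
    rw [this]
    exact measurable_const
  | succ n ih =>
    letI m' := gwSigma Z {q : ℕ × ℕ | q.1 < n + 1}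
    have hXn : Measurable[m'] (X n) :=
      ih.mono (gwSigma_mono (fun q hq => Nat.lt_succ_of_lt hq)) le_rfl
    have hsum : ∀ m : ℕ, Measurable[m'] (fun ω => ∑ j ∈ Finset.range m, Z n j ω) := by
      intro m
      apply Finset.measurable_sum
      intro j _
      exact measurable_Z_gwSigma (S := {q : ℕ × ℕ | q.1 < n + 1}) (Nat.lt_succ_self n)
    apply measurable_to_countable'
    intro k
    have : (X (n+1)) ⁻¹' {k} = ⋃ m : ℕ, ({ω | X n ω = m} ∩ {ω | ∑ j ∈ Finset.range m, Z n j ω = k}) := by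
      ext ω
      simp only [Set.mem_preimage, Set.mem_singleton_iff, Set.mem_iUnion, Set.mem_inter_iff,
        Set.mem_setOf_eq, hXsucc]
      constructor
      · intro h; exact ⟨X n ω, rfl, h⟩
      · rintro ⟨m, rfl, h⟩; exact h
    rw [this]
    exact MeasurableSet.iUnion fun m =>
      (hXn (measurableSet_singleton m)).inter (hsum m (measurableSet_singleton k))

lemma measurable_pow_comp {t : ℝ} {Y : Ω → ℕ} {m' : MeasurableSpace Ω} (hY : Measurable[m'] Y) :
    Measurable[m'] (fun ω => t ^ Y ω) :=
  (measurable_from_top (f := fun k : ℕ => t ^ k)).comp hY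

lemma integrable_of_le_one {f : Ω → ℝ} (hf : AEStronglyMeasurable f P) (h1 : ∀ ω, |f ω| ≤ 1) :
    Integrable f P :=
  (integrable_const (1:ℝ)).mono' hf (Filter.Eventually.of_forall h1)

lemma pgf_nonneg {ξ : Ω → ℕ} {t : ℝ} (ht0 : 0 ≤ t) : 0 ≤ ∫ ω, t ^ ξ ω ∂P :=
  integral_nonneg fun ω => pow_nonneg ht0 _

lemma pgf_le_one {ξ : Ω → ℕ} (hξ : Measurable ξ) {t : ℝ} (ht0 : 0 ≤ t) (ht1 : t ≤ 1) :
    ∫ ω, t ^ ξ ω ∂P ≤ 1 := by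
  have h := integral_mono (μ := P)
    (integrable_of_le_one (measurable_pow_comp hξ).aestronglyMeasurable
      (fun ω => abs_le.2 ⟨by nlinarith [pow_nonneg ht0 (ξ ω)], pow_le_one₀ ht0 ht1⟩))
    (integrable_const 1) (fun ω => pow_le_one₀ ht0 ht1)
  simpa using h

lemma integral_pow_Z {Z : ℕ → ℕ → Ω → ℕ} (hZmeas : ∀ n j, Measurable (Z n j))
    {ξ : Ω → ℕ} (hξ : Measurable ξ)
    (hZdist : ∀ n j, Measure.map (Z n j) P = Measure.map ξ P) (n j : ℕ) (t : ℝ) :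
    ∫ ω, t ^ Z n j ω ∂P = ∫ ω, t ^ ξ ω ∂P := by
  have h1 : ∫ ω, t ^ Z n j ω ∂P = ∫ k, t ^ k ∂(Measure.map (Z n j) P) :=
    (integral_map (hZmeas n j).aemeasurable
      (measurable_from_top (f := fun k : ℕ => t ^ k)).aestronglyMeasurable).symm
  have h2 : ∫ k, t ^ k ∂(Measure.map ξ P) = ∫ ω, t ^ ξ ω ∂P :=
    integral_map hξ.aemeasurable
      (measurable_from_top (f := fun k : ℕ => t ^ k)).aestronglyMeasurable
  rw [h1, hZdist, h2]

lemma indepFun_of_measurable {m₁ m₂ : MeasurableSpace Ω} (h : Indep m₁ m₂ P)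
    {f g : Ω → ℝ} (hf : Measurable[m₁] f) (hg : Measurable[m₂] g) : IndepFun f g P := by
  rw [IndepFun_iff_Indep]
  exact indep_of_indep_of_le_right (indep_of_indep_of_le_left h hf.comap_le) hg.comap_le

lemma integral_prod_pow_Z {Z : ℕ → ℕ → Ω → ℕ} (hZmeas : ∀ n j, Measurable (Z n j))
    (hZindep : iIndepFun (fun p : ℕ × ℕ => Z p.1 p.2) P)
    {ξ : Ω → ℕ} (hξ : Measurable ξ)
    (hZdist : ∀ n j, Measure.map (Z n j) P = Measure.map ξ P)
    (n : ℕ) {t : ℝ} (ht0 : 0 ≤ t) (ht1 : t ≤ 1) :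
    ∀ m : ℕ, ∫ ω, ∏ j ∈ Finset.range m, t ^ Z n j ω ∂P = (∫ ω, t ^ ξ ω ∂P) ^ m := by
  intro m
  induction m with
  | zero => simp
  | succ m ih =>
    have hSmeas : Measurable[gwSigma Z ({n} ×ˢ (Set.Iio m))]
        (fun ω => ∏ j ∈ Finset.range m, t ^ Z n j ω) := by
      apply Finset.measurable_prod
      intro j hj
      exact measurable_pow_comp (measurable_Z_gwSigma
        (by simp [Set.mem_prod, Finset.mem_range.1 hj]))
    have hTmeas : Measurable[gwSigma Z {(n, m)}] (fun ω => t ^ Z n m ω) :=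
      measurable_pow_comp (measurable_Z_gwSigma rfl)
    have hdisj : Disjoint ({n} ×ˢ (Set.Iio m)) ({((n : ℕ), (m : ℕ))} : Set (ℕ × ℕ)) := by
      rw [Set.disjoint_singleton_right]
      simp
    have hindep : IndepFun (fun ω => ∏ j ∈ Finset.range m, t ^ Z n j ω)
        (fun ω => t ^ Z n m ω) P :=
      indepFun_of_measurable (gw_indep' hZmeas hZindep hdisj) hSmeas hTmeas
    have habs : ∀ ω, |∏ j ∈ Finset.range m, t ^ Z n j ω| ≤ 1 := fun ω => by
      rw [abs_of_nonneg (Finset.prod_nonneg fun j _ => pow_nonneg ht0 _)]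
      exact Finset.prod_le_one (fun j _ => pow_nonneg ht0 _) (fun j _ => pow_le_one₀ ht0 ht1)
    have h1 : Integrable (fun ω => ∏ j ∈ Finset.range m, t ^ Z n j ω) P :=
      integrable_of_le_one (hSmeas.mono (gwSigma_le hZmeas _) le_rfl).aestronglyMeasurable habs
    have h2 : Integrable (fun ω => t ^ Z n m ω) P :=
      integrable_of_le_one (measurable_pow_comp (hZmeas n m)).aestronglyMeasurable
        (fun ω => abs_le.2 ⟨by nlinarith [pow_nonneg ht0 (Z n m ω)], pow_le_one₀ ht0 ht1⟩)
    calc ∫ ω, ∏ j ∈ Finset.range (m+1), t ^ Z n j ω ∂P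
        = ∫ ω, (∏ j ∈ Finset.range m, t ^ Z n j ω) * t ^ Z n m ω ∂P := by
          simp [Finset.prod_range_succ]
      _ = (∫ ω, ∏ j ∈ Finset.range m, t ^ Z n j ω ∂P) * ∫ ω, t ^ Z n m ω ∂P :=
          hindep.integral_fun_mul_eq_mul_integral h1.aestronglyMeasurable h2.aestronglyMeasurable
      _ = (∫ ω, t ^ ξ ω ∂P) ^ (m+1) := by
          rw [ih, integral_pow_Z hZmeas hξ hZdist, pow_succ]

lemma integral_tsum_ite {Y : Ω → ℕ} (hY : Measurable Y) {g : ℕ → Ω → ℝ}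
    (hg : ∀ m, Measurable (g m)) (hbd : ∀ m ω, |g m ω| ≤ 1) :
    ∑' m, ∫ ω, (if m = Y ω then g m ω else 0) ∂P = ∫ ω, g (Y ω) ω ∂P := by
  set A : ℕ → Set Ω := fun m => {ω | m = Y ω} with hA
  have hset : ∀ m : ℕ, MeasurableSet (A m) := by
    intro m
    have : A m = Y ⁻¹' {m} := by ext ω; simp [hA, eq_comm]
    rw [this]
    exact hY (measurableSet_singleton m)
  have hmeas : ∀ m : ℕ, Measurable (fun ω => if m = Y ω then g m ω else 0) :=
    fun m => Measurable.ite (hset m) (hg m) measurable_const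
  have hbound : ∀ m, ∫⁻ ω, ‖if m = Y ω then g m ω else 0‖₊ ∂P ≤ P (A m) := by
    intro m
    have hpt : ∀ ω, (‖if m = Y ω then g m ω else 0‖₊ : ℝ≥0∞)
        ≤ (A m).indicator (fun _ => (1:ℝ≥0∞)) ω := by
      intro ω
      by_cases h : m = Y ω
      · rw [if_pos h, Set.indicator_of_mem (show ω ∈ A m from h)]
        have h1 : ‖g m ω‖₊ ≤ 1 := by
          rw [← NNReal.coe_le_coe]
          simpa [Real.norm_eq_abs] using hbd m ω
        exact_mod_cast h1
      · rw [if_neg h]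
        simp
    calc ∫⁻ ω, ‖if m = Y ω then g m ω else 0‖₊ ∂P
        ≤ ∫⁻ ω, (A m).indicator (fun _ => (1:ℝ≥0∞)) ω ∂P := lintegral_mono hpt
      _ = P (A m) := by rw [lintegral_indicator (hset m)]; simp
  have hsum : ∑' m : ℕ, P (A m) = 1 := by
    have hdisj : Pairwise (Function.onFun Disjoint A) := by
      intro a b hab
      simp only [Function.onFun, Set.disjoint_left]
      rintro ω (ha : a = Y ω) (hb : b = Y ω)
      exact hab (ha.trans hb.symm)
    rw [← measure_iUnion hdisj hset]
    have : (⋃ m : ℕ, A m) = Set.univ := by ext ω; simp [hA]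
    rw [this, measure_univ]
  have hne : ∑' m : ℕ, ∫⁻ ω, ‖if m = Y ω then g m ω else 0‖₊ ∂P ≠ ⊤ := by
    apply ne_top_of_le_ne_top (b := (1 : ℝ≥0∞)) ENNReal.one_ne_top
    calc ∑' m : ℕ, ∫⁻ ω, ‖if m = Y ω then g m ω else 0‖₊ ∂P
        ≤ ∑' m : ℕ, P (A m) := ENNReal.tsum_le_tsum hbound
      _ = 1 := hsum
  rw [← integral_tsum (fun m => (hmeas m).aestronglyMeasurable) hne]
  apply integral_congr_ae
  filter_upwards with ω
  rw [tsum_eq_single (Y ω) (fun m hm => if_neg hm)]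
  simp

lemma gw_key {Z : ℕ → ℕ → Ω → ℕ} (hZmeas : ∀ n j, Measurable (Z n j))
    (hZindep : iIndepFun (fun p : ℕ × ℕ => Z p.1 p.2) P)
    {ξ : Ω → ℕ} (hξ : Measurable ξ)
    (hZdist : ∀ n j, Measure.map (Z n j) P = Measure.map ξ P)
    {X : ℕ → Ω → ℕ} (hX0 : ∀ ω, X 0 ω = 1)
    (hXsucc : ∀ n ω, X (n + 1) ω = ∑ j ∈ Finset.range (X n ω), Z n j ω)
    (n : ℕ) {t : ℝ} (ht0 : 0 ≤ t) (ht1 : t ≤ 1)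
    {W : Ω → ℝ} (hW : Measurable[gwSigma Z {q : ℕ × ℕ | q.1 < n}] W)
    (hW0 : ∀ ω, 0 ≤ W ω) (hW1 : ∀ ω, W ω ≤ 1) :
    ∫ ω, W ω * t ^ X (n+1) ω ∂P
      = ∫ ω, W ω * (∫ ω', t ^ ξ ω' ∂P) ^ X n ω ∂P := by
  set G : ℝ := ∫ ω', t ^ ξ ω' ∂P with hGdef
  have hG0 : 0 ≤ G := pgf_nonneg ht0
  have hG1 : G ≤ 1 := pgf_le_one hξ ht0 ht1
  have hXnF : Measurable[gwSigma Z {q : ℕ × ℕ | q.1 < n}] (X n) :=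
    X_measurable_gwSigma hX0 hXsucc n
  have hXn : Measurable (X n) := hXnF.mono (gwSigma_le hZmeas _) le_rfl
  have hXn1 : Measurable (X (n+1)) :=
    (X_measurable_gwSigma hX0 hXsucc (n+1)).mono (gwSigma_le hZmeas _) le_rfl
  have hWm : Measurable W := hW.mono (gwSigma_le hZmeas _) le_rfl
  have habsW : ∀ ω, |W ω| ≤ 1 := fun ω => abs_le.2 ⟨by linarith [hW0 ω], hW1 ω⟩
  -- left side as a tsum
  have hL : ∫ ω, W ω * t ^ X (n+1) ω ∂P
      = ∑' m, ∫ ω, (if m = X n ω then W ω * t ^ X (n+1) ω else 0) ∂P := by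
    refine (integral_tsum_ite hXn (g := fun _ ω => W ω * t ^ X (n+1) ω) ?_ ?_).symm
    · exact fun m => hWm.mul (measurable_pow_comp hXn1)
    · intro m ω
      rw [abs_mul]
      calc |W ω| * |t ^ X (n+1) ω| ≤ 1 * 1 := by
            apply mul_le_mul (habsW ω) _ (abs_nonneg _) zero_le_one
            rw [abs_of_nonneg (pow_nonneg ht0 _)]
            exact pow_le_one₀ ht0 ht1
        _ = 1 := mul_one 1
  -- right side as a tsum
  have hR : ∫ ω, W ω * G ^ X n ω ∂P
      = ∑' m, ∫ ω, (if m = X n ω then W ω * G ^ X n ω else 0) ∂P := by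
    refine (integral_tsum_ite hXn (g := fun _ ω => W ω * G ^ X n ω) ?_ ?_).symm
    · exact fun m => hWm.mul (measurable_pow_comp hXn)
    · intro m ω
      rw [abs_mul]
      calc |W ω| * |G ^ X n ω| ≤ 1 * 1 := by
            apply mul_le_mul (habsW ω) _ (abs_nonneg _) zero_le_one
            rw [abs_of_nonneg (pow_nonneg hG0 _)]
            exact pow_le_one₀ hG0 hG1
        _ = 1 := mul_one 1
  rw [hL, hR]
  congr 1
  funext m
  -- termwise equality
  have hsetF : MeasurableSet[gwSigma Z {q : ℕ × ℕ | q.1 < n}] {ω | m = X n ω} := by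
    have : {ω | m = X n ω} = X n ⁻¹' {m} := by ext ω; simp [eq_comm]
    rw [this]
    exact hXnF (measurableSet_singleton m)
  have hUF : Measurable[gwSigma Z {q : ℕ × ℕ | q.1 < n}] (fun ω => if m = X n ω then W ω else 0) :=
    Measurable.ite hsetF hW measurable_const
  have hU : Measurable (fun ω => if m = X n ω then W ω else 0) :=
    hUF.mono (gwSigma_le hZmeas _) le_rfl
  have hVF : Measurable[gwSigma Z {q : ℕ × ℕ | q.1 = n}]
      (fun ω => ∏ j ∈ Finset.range m, t ^ Z n j ω) := by
    apply Finset.measurable_prod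
    intro j _
    exact measurable_pow_comp (measurable_Z_gwSigma rfl)
  have hV : Measurable (fun ω => ∏ j ∈ Finset.range m, t ^ Z n j ω) :=
    hVF.mono (gwSigma_le hZmeas _) le_rfl
  have hdisj : Disjoint {q : ℕ × ℕ | q.1 < n} {q : ℕ × ℕ | q.1 = n} := by
    rw [Set.disjoint_left]
    rintro ⟨a, b⟩ (ha : a < n) (hb : a = n)
    omega
  have hindep : IndepFun (fun ω => if m = X n ω then W ω else 0)
      (fun ω => ∏ j ∈ Finset.range m, t ^ Z n j ω) P :=
    indepFun_of_measurable (gw_indep' hZmeas hZindep hdisj) hUF hVF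
  have habsU : ∀ ω, |if m = X n ω then W ω else 0| ≤ 1 := fun ω => by
    by_cases h : m = X n ω
    · rw [if_pos h]; exact habsW ω
    · rw [if_neg h]; simp
  have habsV : ∀ ω, |∏ j ∈ Finset.range m, t ^ Z n j ω| ≤ 1 := fun ω => by
    rw [abs_of_nonneg (Finset.prod_nonneg fun j _ => pow_nonneg ht0 _)]
    exact Finset.prod_le_one (fun j _ => pow_nonneg ht0 _) (fun j _ => pow_le_one₀ ht0 ht1)
  have hIU : Integrable (fun ω => if m = X n ω then W ω else 0) P :=
    integrable_of_le_one hU.aestronglyMeasurable habsU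
  have hIV : Integrable (fun ω => ∏ j ∈ Finset.range m, t ^ Z n j ω) P :=
    integrable_of_le_one hV.aestronglyMeasurable habsV
  calc ∫ ω, (if m = X n ω then W ω * t ^ X (n+1) ω else 0) ∂P
      = ∫ ω, (if m = X n ω then W ω else 0) * ∏ j ∈ Finset.range m, t ^ Z n j ω ∂P := by
        apply integral_congr_ae
        filter_upwards with ω
        by_cases h : m = X n ω
        · rw [if_pos h, if_pos h, hXsucc n ω, ← h, Finset.prod_pow_eq_pow_sum]
        · rw [if_neg h, if_neg h, zero_mul]
    _ = (∫ ω, (if m = X n ω then W ω else 0) ∂P) * ∫ ω, ∏ j ∈ Finset.range m, t ^ Z n j ω ∂P :=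
        hindep.integral_fun_mul_eq_mul_integral hIU.aestronglyMeasurable hIV.aestronglyMeasurable
    _ = (∫ ω, (if m = X n ω then W ω else 0) ∂P) * G ^ m := by
        rw [integral_prod_pow_Z hZmeas hZindep hξ hZdist n ht0 ht1 m]
    _ = ∫ ω, (if m = X n ω then W ω else 0) * G ^ m ∂P := (integral_mul_const _ _).symm
    _ = ∫ ω, (if m = X n ω then W ω * G ^ X n ω else 0) ∂P := by
        apply integral_congr_ae
        filter_upwards with ω
        by_cases h : m = X n ω
        · rw [if_pos h, if_pos h, ← h]
        · rw [if_neg h, if_neg h, zero_mul]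

lemma gw_phi {Z : ℕ → ℕ → Ω → ℕ} (hZmeas : ∀ n j, Measurable (Z n j))
    (hZindep : iIndepFun (fun p : ℕ × ℕ => Z p.1 p.2) P)
    {ξ : Ω → ℕ} (hξ : Measurable ξ)
    (hZdist : ∀ n j, Measure.map (Z n j) P = Measure.map ξ P)
    {X : ℕ → Ω → ℕ} (hX0 : ∀ ω, X 0 ω = 1)
    (hXsucc : ∀ n ω, X (n + 1) ω = ∑ j ∈ Finset.range (X n ω), Z n j ω)
    {s : ℝ} (hs0 : 0 ≤ s) (hs1 : s ≤ 1) :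
    ∀ n : ℕ, ∀ t : ℝ, 0 ≤ t → t ≤ 1 →
      ∫ ω, (∏ k ∈ Finset.range n, s ^ X k ω) * t ^ X n ω ∂P
        = (fun u => s * ∫ ω', u ^ ξ ω' ∂P)^[n] t := by
  intro n
  induction n with
  | zero =>
    intro t ht0 ht1
    simp only [Finset.range_zero, Finset.prod_empty, one_mul, Function.iterate_zero, id_eq]
    have : ∀ ω, t ^ X 0 ω = t := fun ω => by rw [hX0 ω, pow_one]
    rw [integral_congr_ae (Filter.Eventually.of_forall this), integral_const]
    simp
  | succ n ih =>
    intro t ht0 ht1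
    have hWmeas : Measurable[gwSigma Z {q : ℕ × ℕ | q.1 < n}]
        (fun ω => ∏ k ∈ Finset.range (n+1), s ^ X k ω) := by
      apply Finset.measurable_prod
      intro k hk
      have hk' : k ≤ n := Nat.lt_succ_iff.1 (Finset.mem_range.1 hk)
      exact measurable_pow_comp ((X_measurable_gwSigma hX0 hXsucc k).mono
        (gwSigma_mono (fun q hq => lt_of_lt_of_le hq hk')) le_rfl)
    have hW0 : ∀ ω, 0 ≤ ∏ k ∈ Finset.range (n+1), s ^ X k ω :=
      fun ω => Finset.prod_nonneg fun k _ => pow_nonneg hs0 _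
    have hW1 : ∀ ω, ∏ k ∈ Finset.range (n+1), s ^ X k ω ≤ 1 :=
      fun ω => Finset.prod_le_one (fun k _ => pow_nonneg hs0 _) (fun k _ => pow_le_one₀ hs0 hs1)
    rw [gw_key hZmeas hZindep hξ hZdist hX0 hXsucc n ht0 ht1 hWmeas hW0 hW1]
    set G : ℝ := ∫ ω', t ^ ξ ω' ∂P with hGdef
    have hG0 : 0 ≤ G := pgf_nonneg ht0
    have hG1 : G ≤ 1 := pgf_le_one hξ ht0 ht1
    have hrw : ∀ ω, (∏ k ∈ Finset.range (n+1), s ^ X k ω) * G ^ X n ω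
        = (∏ k ∈ Finset.range n, s ^ X k ω) * (s * G) ^ X n ω := fun ω => by
      rw [Finset.prod_range_succ, mul_pow, mul_assoc]
    rw [integral_congr_ae (Filter.Eventually.of_forall hrw)]
    rw [ih (s * G) (mul_nonneg hs0 hG0) (mul_le_one₀ hs1 hG0 hG1)]
    rw [← Function.iterate_succ_apply]

lemma enat_tsum_eq_iSup (f : ℕ → ℕ∞) : ∑' n, f n = ⨆ n, ∑ i ∈ Finset.range n, f i := by
  have h : HasSum f (⨆ s : Finset ℕ, ∑ a ∈ s, f a) :=
    tendsto_atTop_iSup (fun _ _ hst => Finset.sum_le_sum_of_subset hst)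
  rw [h.tsum_eq]
  apply le_antisymm
  · exact iSup_le fun s => by
      obtain ⟨n, hn⟩ := s.exists_nat_subset_range
      exact le_iSup_of_le n (Finset.sum_le_sum_of_subset hn)
  · exact iSup_le fun n => le_iSup_of_le (Finset.range n) le_rfl

lemma nat_seq_eventually_eq {u : ℕ → ℕ} (hu : Monotone u) {N : ℕ}
    (h : (⨆ n, (u n : ℕ∞)) = (N:ℕ∞)) : ∀ᶠ n in atTop, u n = N := by
  have hle : ∀ n, u n ≤ N := fun n => by
    have := le_iSup (fun n => (u n : ℕ∞)) n
    rw [h] at this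
    exact_mod_cast this
  have hex : ∃ n, u n = N := by
    by_contra hc
    push_neg at hc
    have hlt : ∀ n, u n < N := fun n => lt_of_le_of_ne (hle n) (hc n)
    rcases Nat.eq_zero_or_pos N with rfl | hN
    · exact absurd (hlt 0) (by omega)
    · have h2 : (⨆ n, (u n : ℕ∞)) ≤ ((N - 1 : ℕ) : ℕ∞) :=
        iSup_le fun n => by exact_mod_cast Nat.le_sub_one_of_lt (hlt n)
      rw [h] at h2
      have : N ≤ N - 1 := by exact_mod_cast h2
      omega
  obtain ⟨n₀, hn₀⟩ := hex
  filter_upwards [eventually_ge_atTop n₀] with n hn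
  exact le_antisymm (hle n) (hn₀ ▸ hu hn)

lemma nat_seq_tendsto_top {u : ℕ → ℕ} (hu : Monotone u) (h : (⨆ n, (u n : ℕ∞)) = ⊤) :
    Tendsto u atTop atTop := by
  apply tendsto_atTop_atTop.2
  intro b
  have hb : ((b:ℕ∞)) < ⨆ n, (u n : ℕ∞) := by rw [h]; exact WithTop.coe_lt_top b
  obtain ⟨n, hn⟩ := lt_iSup_iff.1 hb
  exact ⟨n, fun m hm => le_trans (le_of_lt (by exact_mod_cast hn)) (hu hm)⟩

end GWAux

/-- For a Galton–Watson process with ℕ-valued offspring `ξ`, driven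
by i.i.d. copies `(Z n j)` of `ξ`, with `X 0 = 1`, `X (n+1) = ∑_{j < X n} Z n j`, and
total progeny `π = ∑ₙ X n ∈ ℕ∞`, for every `s ∈ [0,1)` the generating function
`F(s) := E(s^π · 1{π < ∞})` satisfies `F(s) = s · G(F(s))` where `G(t) = E(t^ξ)`. -/
theorem progeny_pgf_functional_equation
    {Ω : Type*} [MeasurableSpace Ω] (P : Measure Ω) [IsProbabilityMeasure P]
    (ξ : Ω → ℕ) (hξmeas : Measurable ξ)
    (Z : ℕ → ℕ → Ω → ℕ) (hZmeas : ∀ n j, Measurable (Z n j))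
    (hZindep : iIndepFun
      (fun p : ℕ × ℕ => Z p.1 p.2) P)
    (hZdist : ∀ n j, Measure.map (Z n j) P = Measure.map ξ P)
    (X : ℕ → Ω → ℕ) (hX0 : ∀ ω, X 0 ω = 1)
    (hXsucc : ∀ n ω, X (n + 1) ω = ∑ j ∈ Finset.range (X n ω), Z n j ω)
    (π : Ω → ℕ∞) (hπ : ∀ ω, π ω = ∑' n, (X n ω : ℕ∞))
    (s : ℝ) (hs0 : 0 ≤ s) (hs1 : s < 1) :
    (∫ ω, (if π ω = ⊤ then (0 : ℝ) else s ^ (π ω).toNat) ∂P)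
      = s * ∫ ω,
          (∫ ω', (if π ω' = ⊤ then (0 : ℝ) else s ^ (π ω').toNat) ∂P) ^ (ξ ω) ∂P := by
  have hs1' : s ≤ 1 := hs1.le
  set L : ℝ := ∫ ω, (if π ω = ⊤ then (0 : ℝ) else s ^ (π ω).toNat) ∂P with hLdef
  set F : ℕ → ℝ := fun n => ∫ ω, ∏ k ∈ Finset.range (n+1), s ^ X k ω ∂P with hFdef
  set Φ : ℝ → ℝ := fun u => s * ∫ ω', u ^ ξ ω' ∂P with hΦdef
  -- F n = Φ^[n] s
  have hFn : ∀ n, F n = Φ^[n] s := by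
    intro n
    have h := gw_phi (P := P) hZmeas hZindep hξmeas hZdist hX0 hXsucc hs0 hs1' n s hs0 hs1'
    rw [hFdef]
    simp only
    rw [← h]
    apply integral_congr_ae
    filter_upwards with ω
    rw [Finset.prod_range_succ]
  have hFrec : ∀ n, F (n+1) = Φ (F n) := by
    intro n
    rw [hFn, hFn, Function.iterate_succ_apply']
  -- measurability of X
  have hXmeas : ∀ n, Measurable (X n) := fun n =>
    (X_measurable_gwSigma hX0 hXsucc n).mono (gwSigma_le hZmeas _) le_rfl
  have hfmeas : ∀ n, Measurable (fun ω => ∏ k ∈ Finset.range (n+1), s ^ X k ω) := by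
    intro n
    apply Finset.measurable_prod
    intro k _
    exact measurable_pow_comp (hXmeas k)
  have hf0 : ∀ n ω, 0 ≤ ∏ k ∈ Finset.range (n+1), s ^ X k ω :=
    fun n ω => Finset.prod_nonneg fun k _ => pow_nonneg hs0 _
  have hf1 : ∀ n ω, ∏ k ∈ Finset.range (n+1), s ^ X k ω ≤ 1 :=
    fun n ω => Finset.prod_le_one (fun k _ => pow_nonneg hs0 _) (fun k _ => pow_le_one₀ hs0 hs1')
  have hF0 : ∀ n, 0 ≤ F n := fun n => integral_nonneg (hf0 n)
  have hF1 : ∀ n, F n ≤ 1 := by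
    intro n
    have h := integral_mono (μ := P)
      (integrable_of_le_one (hfmeas n).aestronglyMeasurable
        (fun ω => abs_le.2 ⟨by linarith [hf0 n ω], hf1 n ω⟩))
      (integrable_const 1) (hf1 n)
    simpa using h
  -- pointwise convergence
  have hptwise : ∀ ω, Tendsto (fun n => ∏ k ∈ Finset.range (n+1), s ^ X k ω) atTop
      (𝓝 (if π ω = ⊤ then (0:ℝ) else s ^ (π ω).toNat)) := by
    intro ω
    set u : ℕ → ℕ := fun n => ∑ k ∈ Finset.range n, X k ω with hudef
    have humono : Monotone u := by
      intro a b hab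
      exact Finset.sum_le_sum_of_subset (Finset.range_subset_range.2 hab)
    have hprod : ∀ n, ∏ k ∈ Finset.range (n+1), s ^ X k ω = s ^ u (n+1) := fun n =>
      Finset.prod_pow_eq_pow_sum _ _ _
    have hπω : π ω = ⨆ n, (u n : ℕ∞) := by
      rw [hπ ω, enat_tsum_eq_iSup]
      congr 1
      funext n
      rw [hudef]
      push_cast
      rfl
    by_cases htop : π ω = ⊤
    · rw [if_pos htop]
      have hu_top : Tendsto u atTop atTop :=
        nat_seq_tendsto_top humono (by rw [← hπω]; exact htop)
      have : Tendsto (fun n => s ^ u (n+1)) atTop (𝓝 0) :=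
        (tendsto_pow_atTop_nhds_zero_of_lt_one hs0 hs1).comp
          (hu_top.comp (tendsto_add_atTop_nat 1))
      exact Tendsto.congr (fun n => (hprod n).symm) this
    · rw [if_neg htop]
      have hcoe : ((π ω).toNat : ℕ∞) = π ω := ENat.coe_toNat htop
      have hev : ∀ᶠ n in atTop, u n = (π ω).toNat :=
        nat_seq_eventually_eq humono (by rw [← hπω, hcoe])
      have hev1 : ∀ᶠ n in atTop, ∏ k ∈ Finset.range (n+1), s ^ X k ω = s ^ (π ω).toNat := by
        filter_upwards [(tendsto_add_atTop_nat 1).eventually hev] with n hn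
        rw [hprod n, hn]
      exact Tendsto.congr' (by filter_upwards [hev1] with n hn; exact hn.symm) tendsto_const_nhds
  -- F tends to L
  have htendF : Tendsto F atTop (𝓝 L) := by
    apply tendsto_integral_of_dominated_convergence (fun _ => (1:ℝ))
      (fun n => (hfmeas n).aestronglyMeasurable) (integrable_const 1)
    · intro n
      filter_upwards with ω
      rw [Real.norm_eq_abs, abs_of_nonneg (hf0 n ω)]
      exact hf1 n ω
    · filter_upwards with ω
      exact hptwise ω
  -- ∫ (F n)^ξ tends to ∫ L^ξ
  have htendG : Tendsto (fun n => ∫ ω, (F n) ^ ξ ω ∂P) atTop (𝓝 (∫ ω, L ^ ξ ω ∂P)) := by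
    apply tendsto_integral_of_dominated_convergence (fun _ => (1:ℝ))
      (fun n => (measurable_pow_comp hξmeas).aestronglyMeasurable) (integrable_const 1)
    · intro n
      filter_upwards with ω
      rw [Real.norm_eq_abs, abs_pow]
      exact pow_le_one₀ (abs_nonneg _) (abs_le.2 ⟨by linarith [hF0 n], hF1 n⟩)
    · filter_upwards with ω
      exact (htendF.pow (ξ ω))
  -- conclude
  have h1 : Tendsto (fun n => F (n+1)) atTop (𝓝 L) := htendF.comp (tendsto_add_atTop_nat 1)
  have h2 : Tendsto (fun n => F (n+1)) atTop (𝓝 (s * ∫ ω, L ^ ξ ω ∂P)) := by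
    have := htendG.const_mul s
    apply Tendsto.congr _ this
    intro n
    rw [hFrec n]
  exact tendsto_nhds_unique h1 h2
end

section
/- For every integer d ≥ 1, (1/2)(1 + 1/(4d))^{4d} ≥ 1 + (1/4)(1 − 1/(4d)) > 1. In particular, setting φ(s) = (1 + 2d(1−s)) s^{4d} and s_0 = 1 + 1/(4d), one has φ(s_0) ≥ 1 + (1/4)(1 − 1/(4d)) > 1. -/
/-- Cubic Bernoulli-type lower bound. -/
lemma cubic_bound (n : ℕ) (x : ℝ) (hx : 0 ≤ x) :
    1 + n * x + n * (n - 1) / 2 * x ^ 2 + n * (n - 1) * (n - 2) / 6 * x ^ 3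
      ≤ (1 + x) ^ n := by
  induction n with
  | zero => norm_num
  | succ n ih =>
    have h2 : (0:ℝ) ≤ x ^ 2 := sq_nonneg x
    have h3 : (0:ℝ) ≤ x ^ 3 := by positivity
    have h4 : (0:ℝ) ≤ x ^ 4 := by positivity
    have : (1 + x) ^ (n + 1) = (1 + x) ^ n * (1 + x) := by ring
    rw [this]
    push_cast
    push_cast at ih
    have hB : (0:ℝ) ≤ (n:ℝ) * ((n:ℝ) - 1) * ((n:ℝ) - 2) := by
      match n with
      | 0 => norm_num
      | 1 => norm_num
      | 2 => norm_num
      | (k+3) =>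
        have hk : (0:ℝ) ≤ (k:ℝ) := Nat.cast_nonneg k
        push_cast
        nlinarith [hk, mul_nonneg hk hk, mul_nonneg (mul_nonneg hk hk) hk]
    nlinarith [mul_le_mul_of_nonneg_right ih (by linarith : (0:ℝ) ≤ 1 + x),
      mul_nonneg hB h4, mul_nonneg hB h3]

/-- For every integer `d ≥ 1`,
`(1/2)(1 + 1/(4d))^{4d} ≥ 1 + (1/4)(1 − 1/(4d)) > 1`; in particular, with
`φ(s) = (1 + 2d(1−s)) s^{4d}` and `s₀ = 1 + 1/(4d)`, one has
`φ(s₀) ≥ 1 + (1/4)(1 − 1/(4d)) > 1`. -/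
theorem phi_estimate (d : ℕ) (hd : 1 ≤ d) :
    ((1 / 2 : ℝ) * (1 + 1 / (4 * d)) ^ (4 * d) ≥ 1 + (1 / 4) * (1 - 1 / (4 * d)) ∧
      (1 : ℝ) < 1 + (1 / 4) * (1 - 1 / (4 * d))) ∧
    ((fun s : ℝ => (1 + 2 * d * (1 - s)) * s ^ (4 * d)) (1 + 1 / (4 * d))
        ≥ 1 + (1 / 4) * (1 - 1 / (4 * d)) ∧
      (1 : ℝ) < 1 + (1 / 4) * (1 - 1 / (4 * d))) := by
  have ht : (1:ℝ) ≤ (d:ℝ) := by exact_mod_cast hd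
  have ht0 : (0:ℝ) < (d:ℝ) := by linarith
  have hx0 : (0:ℝ) ≤ 1 / (4 * (d:ℝ)) := by positivity
  have key := cubic_bound (4 * d) (1 / (4 * (d:ℝ))) hx0
  push_cast at key
  have hmain : (1 / 2 : ℝ) * (1 + 1 / (4 * d)) ^ (4 * d)
      ≥ 1 + (1 / 4) * (1 - 1 / (4 * d)) := by
    have h1 : (4:ℝ) * d ≠ 0 := by positivity
    have hexp : 1 + (4:ℝ) * d * (1 / (4 * d)) + 4 * d * (4 * d - 1) / 2 * (1 / (4 * d)) ^ 2
        + 4 * d * (4 * d - 1) * (4 * d - 2) / 6 * (1 / (4 * d)) ^ 3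
        ≥ 2 * (1 + (1 / 4) * (1 - 1 / (4 * d))) := by
      field_simp
      have h42 : (0:ℝ) ≤ (4 * (d:ℝ) - 1) * (4 * d - 2) := by nlinarith
      nlinarith [mul_nonneg h42 (pow_pos ht0 3).le, pow_pos ht0 3, pow_pos ht0 2,
        mul_nonneg h42 (pow_pos ht0 2).le]
    nlinarith [key]
  have hlt : (1:ℝ) < 1 + (1 / 4) * (1 - 1 / (4 * d)) := by
    have : 1 / (4 * (d:ℝ)) ≤ 1 / 4 := by
      apply div_le_div_of_nonneg_left (by norm_num) (by norm_num)
      linarith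
    nlinarith
  refine ⟨⟨hmain, hlt⟩, ⟨?_, hlt⟩⟩
  simp only
  have h1 : (4:ℝ) * d ≠ 0 := by positivity
  have : (1 + 2 * (d:ℝ) * (1 - (1 + 1 / (4 * d)))) = 1 / 2 := by
    field_simp
    ring
  rw [this]
  exact hmain
end

section
/- Let d ≥ 1 be an integer, ℒ = ℤ^d × ℕ, and let (Ω, 𝔽, P) be a probability space carrying, for each v ∈ ℒ, a measurable indicator random variable X_v : Ω → {0, 1} (X_v = 1 meaning v is closed). Assume: (i) 2-dependence: for every finite set S ⊆ ℒ whose elements are pairwise at ℓ∞-distance greater than 2 (viewing ℒ ⊆ ℤ^{d+1}), the family (X_v)_{v ∈ S} is mutually independent; and (ii) P(X_v = 1) ≤ ε for all v ∈ ℒ, where 0 ≤ ε ≤ 1. Then for every integer n ≥ 1 and every injective sequence v_0, v_1, …, v_n in ℒ with ‖v_{i+1} − v_i‖_1 = 1 for all i, P(X_{v_0} = 1 and … and X_{v_n} = 1) ≤ ε^{n/5^{d+1}} (real exponent). -/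
open MeasureTheory ProbabilityTheory

attribute [local instance] Classical.propDecidable

private def PathSep (d : ℕ) (v w : (Fin d → ℤ) × ℕ) : Prop :=
  (∃ i, 2 < |v.1 i - w.1 i|) ∨ 2 < |(v.2 : ℤ) - (w.2 : ℤ)|

private lemma close_card (d : ℕ) (W : Finset ((Fin d → ℤ) × ℕ)) (w : (Fin d → ℤ) × ℕ) :
    (W.filter (fun u => ¬ PathSep d u w)).card ≤ 5 ^ (d + 1) := by
  classical
  have := Finset.card_le_card_of_injOn
    (f := fun u : (Fin d → ℤ) × ℕ => ((fun i => u.1 i - w.1 i, (u.2 : ℤ) - (w.2 : ℤ)) :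
      (Fin d → ℤ) × ℤ))
    (s := W.filter (fun u => ¬ PathSep d u w))
    (t := (Fintype.piFinset fun _ : Fin d => Finset.Icc (-2 : ℤ) 2) ×ˢ Finset.Icc (-2 : ℤ) 2)
    (by
      intro u hu
      simp only [Finset.mem_coe, Finset.mem_filter] at hu
      have h := hu.2
      rw [PathSep] at h
      push_neg at h
      simp only [Finset.mem_coe, Finset.mem_product, Fintype.mem_piFinset, Finset.mem_Icc]
      exact ⟨fun i => abs_le.1 (h.1 i), abs_le.1 h.2⟩)
    (by
      intro a _ b _ hab
      simp only [Prod.mk.injEq] at hab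
      have h1 : a.1 = b.1 := by
        funext i
        have := congrFun hab.1 i
        omega
      have h2 : a.2 = b.2 := by
        have := hab.2
        omega
      exact Prod.ext h1 h2)
  calc (W.filter (fun u => ¬ PathSep d u w)).card ≤ _ := this
    _ ≤ 5 ^ (d + 1) := by
        rw [Finset.card_product, Fintype.card_piFinset]
        simp [Int.card_Icc, pow_succ]

private lemma PathSep.symm {d : ℕ} {x y : (Fin d → ℤ) × ℕ} (h : PathSep d x y) :
    PathSep d y x := by
  rcases h with ⟨i, hi⟩ | h
  · exact Or.inl ⟨i, by rw [abs_sub_comm]; exact hi⟩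
  · exact Or.inr (by rw [abs_sub_comm]; exact h)

private lemma exists_separated (d : ℕ) :
    ∀ m (W : Finset ((Fin d → ℤ) × ℕ)), W.card ≤ m →
    ∃ T ⊆ W, (∀ x ∈ T, ∀ y ∈ T, x ≠ y → PathSep d x y) ∧ W.card ≤ 5 ^ (d + 1) * T.card := by
  classical
  intro m
  induction m with
  | zero =>
    intro W hW
    exact ⟨∅, Finset.empty_subset _, by simp, by simpa using hW⟩
  | succ m ih =>
    intro W hW
    rcases W.eq_empty_or_nonempty with rfl | ⟨w, hw⟩
    · exact ⟨∅, Finset.empty_subset _, by simp, by simp⟩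
    · set W' := W.filter (fun u => PathSep d u w) with hW'
      have hsub : W' ⊆ W := Finset.filter_subset _ _
      have hcard : W'.card ≤ m := by
        have hlt : W'.card < W.card := by
          apply Finset.card_lt_card
          refine ⟨hsub, fun hall => ?_⟩
          have := hall hw
          rw [hW', Finset.mem_filter] at this
          have h2 := this.2
          rw [PathSep] at h2
          simp at h2
        omega
      obtain ⟨T, hTsub, hTsep, hTcard⟩ := ih W' hcard
      refine ⟨insert w T, ?_, ?_, ?_⟩
      · intro x hx
        rcases Finset.mem_insert.1 hx with rfl | hx
        · exact hw
        · exact hsub (hTsub hx)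
      · intro x hx y hy hxy
        rcases Finset.mem_insert.1 hx with hxw | hxT
        · rcases Finset.mem_insert.1 hy with hyw | hyT
          · exact absurd (hxw.trans hyw.symm) hxy
          · rw [hxw]
            exact PathSep.symm (Finset.mem_filter.1 (hTsub hyT)).2
        · rcases Finset.mem_insert.1 hy with hyw | hyT
          · rw [hyw]
            exact (Finset.mem_filter.1 (hTsub hxT)).2
          · exact hTsep x hxT y hyT hxy
      · have hsplit : W.card ≤ W'.card + 5 ^ (d + 1) := by
          have : W.card = W'.card + (W.filter (fun u => ¬ PathSep d u w)).card := by
            rw [hW']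
            exact (Finset.card_filter_add_card_filter_not _).symm
          have := close_card d W w
          omega
        have hwT : w ∉ T := by
          intro hmem
          have := (Finset.mem_filter.1 (hTsub hmem)).2
          rw [PathSep] at this
          simp at this
        rw [Finset.card_insert_of_notMem hwT]
        calc W.card ≤ W'.card + 5 ^ (d + 1) := hsplit
          _ ≤ 5 ^ (d + 1) * T.card + 5 ^ (d + 1) := by omega
          _ = 5 ^ (d + 1) * (T.card + 1) := by ring

/-- Consider a 2-dependent site percolation process on
`ℒ = ℤ^d × ℕ ⊆ ℤ^{d+1}` given by events `A v` (`v` closed), with `P(A v) ≤ ε`, such that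
any subfamily indexed by sites pairwise at `ℓ∞`-distance greater than `2` is mutually
independent. Then for every self-avoiding path `v 0, …, v n` (consecutive sites at
`ℓ1`-distance one), `P(all sites of the path are closed) ≤ ε^{n/5^{d+1}}`. -/
theorem closed_path_probability_bound
    {Ω : Type*} [MeasurableSpace Ω] (P : Measure Ω) [IsProbabilityMeasure P]
    (d : ℕ) (hd : 1 ≤ d) (ε : ℝ) (hε0 : 0 ≤ ε) (hε1 : ε ≤ 1)
    (A : (Fin d → ℤ) × ℕ → Set Ω) (hAmeas : ∀ v, MeasurableSet (A v))
    (hAprob : ∀ v, P (A v) ≤ ENNReal.ofReal ε)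
    (h2dep : ∀ S : Finset ((Fin d → ℤ) × ℕ),
      (∀ v ∈ S, ∀ w ∈ S, v ≠ w →
        (∃ i, 2 < |v.1 i - w.1 i|) ∨ 2 < |(v.2 : ℤ) - (w.2 : ℤ)|) →
      iIndepSet (fun v : {x // x ∈ S} => A v.1) P)
    (n : ℕ) (hn : 1 ≤ n) (v : Fin (n + 1) → (Fin d → ℤ) × ℕ)
    (hinj : Function.Injective v)
    (hpath : ∀ i : Fin n,
      (∑ i', |(v i.castSucc).1 i' - (v i.succ).1 i'|)
        + |((v i.castSucc).2 : ℤ) - ((v i.succ).2 : ℤ)| = 1) :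
    (P (⋂ i, A (v i))).toReal ≤ ε ^ ((n : ℝ) / 5 ^ (d + 1)) := by
  classical
  set W : Finset ((Fin d → ℤ) × ℕ) := Finset.image v Finset.univ with hWdef
  have hWcard : W.card = n + 1 := by
    rw [hWdef, Finset.card_image_of_injective _ hinj, Finset.card_univ, Fintype.card_fin]
  obtain ⟨T, hTsub, hTsep, hTcard⟩ := exists_separated d W.card W le_rfl
  -- probability bound through T
  have hindep := h2dep T (fun x hx y hy hxy => hTsep x hx y hy hxy)
  have hprod : P (⋂ w ∈ T, A w) = ∏ w ∈ T, P (A w) := by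
    have := hindep.meas_biInter (Finset.univ : Finset {x // x ∈ T})
    simp only [Finset.mem_univ, Set.iInter_true] at this
    rw [show (⋂ w ∈ T, A w) = ⋂ x : {x // x ∈ T}, A x.1 by
          ext ω; simp [Set.mem_iInter]]
    rw [show (∏ w ∈ T, P (A w)) = ∏ x : {x // x ∈ T}, P (A x.1) by
          rw [← Finset.prod_coe_sort]]
    simpa using this
  have hmono : P (⋂ i, A (v i)) ≤ P (⋂ w ∈ T, A w) := by
    apply measure_mono
    intro ω hω
    simp only [Set.mem_iInter] at hω ⊢
    intro w hw
    obtain ⟨i, -, rfl⟩ := Finset.mem_image.1 (hTsub hw)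
    exact hω i
  have hbound : P (⋂ i, A (v i)) ≤ (ENNReal.ofReal ε) ^ T.card := by
    calc P (⋂ i, A (v i)) ≤ P (⋂ w ∈ T, A w) := hmono
      _ = ∏ w ∈ T, P (A w) := hprod
      _ ≤ ∏ _w ∈ T, ENNReal.ofReal ε := Finset.prod_le_prod' fun w _ => hAprob w
      _ = (ENNReal.ofReal ε) ^ T.card := Finset.prod_const _
  have htoReal : (P (⋂ i, A (v i))).toReal ≤ ε ^ T.card := by
    have h1 : ((ENNReal.ofReal ε) ^ T.card).toReal = ε ^ T.card := by
      rw [ENNReal.toReal_pow, ENNReal.toReal_ofReal hε0]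
    calc (P (⋂ i, A (v i))).toReal
        ≤ ((ENNReal.ofReal ε) ^ T.card).toReal := by
          apply ENNReal.toReal_mono _ hbound
          exact ENNReal.pow_ne_top ENNReal.ofReal_ne_top
      _ = ε ^ T.card := h1
  -- exponent comparison
  have hexp : (n : ℝ) / 5 ^ (d + 1) ≤ (T.card : ℝ) := by
    have h5 : (0:ℝ) < 5 ^ (d + 1) := by positivity
    rw [div_le_iff₀ h5]
    have : (n : ℕ) ≤ 5 ^ (d + 1) * T.card := by omega
    calc (n : ℝ) ≤ (5 ^ (d + 1) * T.card : ℕ) := by exact_mod_cast this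
      _ = (T.card : ℝ) * 5 ^ (d + 1) := by push_cast; ring
  rcases eq_or_lt_of_le hε0 with hε | hε
  · -- ε = 0
    have hT1 : 1 ≤ T.card := by
      have : 0 < W.card := by omega
      by_contra h
      push_neg at h
      interval_cases h' : T.card <;> omega
    have hzero : ε ^ T.card = 0 := by
      rw [← hε]; exact zero_pow (by omega)
    have hrhs : ε ^ ((n : ℝ) / 5 ^ (d + 1)) = 0 := by
      rw [← hε]
      apply Real.zero_rpow
      positivity
    rw [hrhs]
    calc (P (⋂ i, A (v i))).toReal ≤ ε ^ T.card := htoReal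
      _ = 0 := hzero
  · calc (P (⋂ i, A (v i))).toReal ≤ ε ^ T.card := htoReal
      _ = ε ^ ((T.card : ℕ) : ℝ) := by rw [Real.rpow_natCast]
      _ ≤ ε ^ ((n : ℝ) / 5 ^ (d + 1)) := Real.rpow_le_rpow_of_exponent_ge hε hε1 hexp
end

section
/- Let d ≥ 1 be an integer, ℒ = ℤ^d × ℕ with directed edges (m, n) → (m', n') whenever ‖m − m'‖_1 + |n − n'| = 1 and n ≤ n', and let ε = (4d+2)^{−5^{d+1}}. Let (Ω, 𝔽, P) be a probability space carrying, for each v ∈ ℒ, a measurable indicator random variable X_v : Ω → {0, 1} (X_v = 1 meaning v is closed), such that: (i) for every finite set S ⊆ ℒ whose elements are pairwise at ℓ∞-distance greater than 2 (viewing ℒ ⊆ ℤ^{d+1}), the family (X_v)_{v ∈ S} is mutually independent; and (ii) P(X_v = 1) ≤ ε for all v ∈ ℒ. Then for every integer n ≥ 1, the probability that there exists an injective directed path v_0 = (0,0), v_1, …, v_n in ℒ (each consecutive pair joined by a directed edge) with X_{v_i} = 1 for all i = 0, …, n, is at most (1/2)^n. -/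
open MeasureTheory ProbabilityTheory ENNReal Function

namespace NPaux

abbrev Site (d : ℕ) := (Fin d → ℤ) × ℕ

abbrev Move (d : ℕ) := (Fin d × Bool) ⊕ Unit

def Far {d : ℕ} (a b : Site d) : Prop :=
  (∃ i, 2 < |a.1 i - b.1 i|) ∨ 2 < |(a.2 : ℤ) - (b.2 : ℤ)|

lemma far_irrefl {d : ℕ} (a : Site d) : ¬ Far a a := by
  simp [Far]

lemma far_symm {d : ℕ} {a b : Site d} (h : Far a b) : Far b a := by
  rcases h with ⟨i, hi⟩ | h
  · exact Or.inl ⟨i, by rwa [abs_sub_comm]⟩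
  · exact Or.inr (by rwa [abs_sub_comm])

def stepFn {d : ℕ} (a : Site d) (m : Move d) : Site d :=
  match m with
  | Sum.inl (k, b) => (fun j => a.1 j + if j = k then (if b then 1 else -1) else 0, a.2)
  | Sum.inr _ => (a.1, a.2 + 1)

def pathAux {d : ℕ} (s : ℕ → Move d) : ℕ → Site d
  | 0 => (0, 0)
  | i + 1 => stepFn (pathAux s i) (s i)

lemma sum_abs_eq_one {d : ℕ} {f : Fin d → ℤ} (h : ∑ k, |f k| = 1) :
    ∃ k, |f k| = 1 ∧ ∀ j, j ≠ k → f j = 0 := by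
  have hpos : ∃ k, f k ≠ 0 := by
    by_contra hc
    push_neg at hc
    simp [hc] at h
  obtain ⟨k, hk⟩ := hpos
  have h1k : 1 ≤ |f k| := Int.one_le_abs hk
  have hsplit : |f k| + ∑ j ∈ Finset.univ.erase k, |f j| = 1 :=
    (Finset.add_sum_erase _ _ (Finset.mem_univ k)).trans h
  have hrn : 0 ≤ ∑ j ∈ Finset.univ.erase k, |f j| :=
    Finset.sum_nonneg fun j _ => abs_nonneg _
  have hfk : |f k| = 1 := by omega
  refine ⟨k, hfk, fun j hj => ?_⟩
  have hz : ∑ j ∈ Finset.univ.erase k, |f j| = 0 := by omega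
  have := (Finset.sum_eq_zero_iff_of_nonneg (fun j _ => abs_nonneg (f j))).1 hz j
    (Finset.mem_erase.mpr ⟨hj, Finset.mem_univ j⟩)
  exact abs_eq_zero.mp this

lemma exists_move {d : ℕ} (a b : Site d)
    (h1 : (∑ k, |a.1 k - b.1 k|) + |(a.2 : ℤ) - (b.2 : ℤ)| = 1)
    (h2 : a.2 ≤ b.2) : ∃ m : Move d, stepFn a m = b := by
  have hsn : 0 ≤ ∑ k, |a.1 k - b.1 k| := Finset.sum_nonneg fun k _ => abs_nonneg _
  rcases eq_or_lt_of_le h2 with heq | hlt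
  · -- same time, one spatial move
    have ht : |(a.2 : ℤ) - (b.2 : ℤ)| = 0 := by rw [heq]; simp
    have hs : ∑ k, |a.1 k - b.1 k| = 1 := by omega
    obtain ⟨k, hk1, hk0⟩ := sum_abs_eq_one hs
    have habs : a.1 k - b.1 k = 1 ∨ a.1 k - b.1 k = -1 := by
      rcases (abs_eq (by norm_num : (0:ℤ) ≤ 1)).mp hk1 with h | h
      · exact Or.inl h
      · exact Or.inr h
    rcases habs with hpm | hpm
    · refine ⟨Sum.inl (k, false), Prod.ext (funext fun j => ?_) heq⟩
      show a.1 j + (if j = k then (if false then 1 else -1) else 0) = b.1 j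
      by_cases hj : j = k
      · subst hj; simp; omega
      · have := hk0 j hj; simp only [if_neg hj]; omega
    · refine ⟨Sum.inl (k, true), Prod.ext (funext fun j => ?_) heq⟩
      show a.1 j + (if j = k then (if true then 1 else -1) else 0) = b.1 j
      by_cases hj : j = k
      · subst hj; simp; omega
      · have := hk0 j hj; simp only [if_neg hj]; omega
  · -- time move
    have hs0 : ∑ k, |a.1 k - b.1 k| = 0 := by
      have : 1 ≤ |(a.2 : ℤ) - (b.2 : ℤ)| := by
        rw [abs_sub_comm, abs_of_nonneg (by omega : (0:ℤ) ≤ (b.2 : ℤ) - (a.2 : ℤ))]; omega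
      omega
    have hco : ∀ k, a.1 k = b.1 k := by
      intro k
      have h0 := (Finset.sum_eq_zero_iff_of_nonneg
        (fun j _ => abs_nonneg (a.1 j - b.1 j))).1 hs0 k (Finset.mem_univ k)
      have := abs_eq_zero.mp h0
      omega
    have ht : b.2 = a.2 + 1 := by
      have : |(a.2 : ℤ) - (b.2 : ℤ)| = 1 := by omega
      rw [abs_sub_comm, abs_of_nonneg (by omega : (0:ℤ) ≤ (b.2 : ℤ) - (a.2 : ℤ))] at this
      omega
    refine ⟨Sum.inr (), Prod.ext (funext fun k => ?_) ht.symm⟩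
    exact congrArg (fun x => x) (hco k)

lemma exists_moves {d n : ℕ} (v : Fin (n + 1) → Site d) (h0 : v 0 = (0, 0))
    (hstep : ∀ i : Fin n, ∃ m : Move d, stepFn (v i.castSucc) m = v i.succ) :
    ∃ s : Fin n → Move d,
      ∀ i : Fin (n + 1),
        pathAux (fun j => if h : j < n then s ⟨j, h⟩ else Sum.inr ()) i.val = v i := by
  choose s hs using hstep
  refine ⟨s, ?_⟩
  set s' : ℕ → Move d := fun j => if h : j < n then s ⟨j, h⟩ else Sum.inr () with hs'
  suffices H : ∀ j (h : j < n + 1), pathAux s' j = v ⟨j, h⟩ by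
    intro i
    have := H i.val i.isLt
    simpa using this
  intro j
  induction j with
  | zero => intro h; simpa [pathAux] using h0.symm
  | succ j ih =>
    intro h
    have hj : j < n := Nat.lt_of_succ_lt_succ h
    have e1 : pathAux s' (j + 1) = stepFn (pathAux s' j) (s' j) := rfl
    rw [e1, ih (Nat.lt_of_succ_lt h)]
    have e2 : s' j = s ⟨j, hj⟩ := dif_pos hj
    rw [e2]
    exact hs ⟨j, hj⟩

end NPaux
namespace NPaux

instance {d : ℕ} (a b : Site d) : Decidable (Far a b) :=
  decidable_of_iff ((∃ i, 2 < |a.1 i - b.1 i|) ∨ 2 < |(a.2 : ℤ) - (b.2 : ℤ)|) Iff.rfl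

lemma card_near {d N : ℕ} (v : Fin N → Site d) (hv : Function.Injective v) (c : Site d) :
    (Finset.univ.filter fun i => ¬ Far (v i) c).card ≤ 5 ^ (d + 1) := by
  classical
  set B : Finset ((Fin d → ℤ) × ℤ) :=
    (Fintype.piFinset fun k => Finset.Icc (c.1 k - 2) (c.1 k + 2)) ×ˢ
      Finset.Icc ((c.2 : ℤ) - 2) ((c.2 : ℤ) + 2) with hB
  have hmap : ∀ i ∈ (Finset.univ.filter fun i => ¬ Far (v i) c),
      ((v i).1, ((v i).2 : ℤ)) ∈ B := by
    intro i hi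
    rw [Finset.mem_filter] at hi
    have hnf := hi.2
    rw [Far] at hnf
    push_neg at hnf
    obtain ⟨h1, h2⟩ := hnf
    rw [hB, Finset.mem_product]
    constructor
    · rw [Fintype.mem_piFinset]
      intro k
      have hk := abs_le.mp (h1 k)
      rw [Finset.mem_Icc]
      dsimp only
      omega
    · rw [Finset.mem_Icc]
      have h2' := abs_le.mp h2
      dsimp only
      omega
  have hinj : Set.InjOn (fun i => ((v i).1, ((v i).2 : ℤ)))
      ↑(Finset.univ.filter fun i => ¬ Far (v i) c) := by
    intro i _ j _ hij
    apply hv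
    dsimp only at hij
    rw [Prod.mk.injEq] at hij
    obtain ⟨h1, h2⟩ := hij
    exact Prod.ext h1 (by exact_mod_cast h2)
  have hcard := Finset.card_le_card_of_injOn _ hmap hinj
  refine hcard.trans ?_
  rw [hB, Finset.card_product, Fintype.card_piFinset]
  simp only [Int.card_Icc]
  have e1 : ∀ k : Fin d, (c.1 k + 2 + 1 - (c.1 k - 2)).toNat = 5 := by intro k; omega
  have e2 : ((c.2 : ℤ) + 2 + 1 - ((c.2 : ℤ) - 2)).toNat = 5 := by omega
  rw [e2, Finset.prod_congr rfl (fun k _ => e1 k), Finset.prod_const]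
  simp [pow_succ]

lemma exists_sparse {d N : ℕ} (v : Fin (N + 1) → Site d) (hv : Function.Injective v) :
    ∃ T : Finset (Fin (N + 1)),
      (∀ i ∈ T, ∀ j ∈ T, i ≠ j → Far (v i) (v j)) ∧ N + 1 ≤ T.card * 5 ^ (d + 1) := by
  classical
  set 𝒯 : Finset (Finset (Fin (N + 1))) :=
    Finset.univ.filter
      (fun T : Finset (Fin (N + 1)) => ∀ i ∈ T, ∀ j ∈ T, i ≠ j → Far (v i) (v j)) with h𝒯
  have hne : 𝒯.Nonempty := ⟨∅, by simp [h𝒯]⟩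
  obtain ⟨T, hT, hmax⟩ := 𝒯.exists_max_image Finset.card hne
  have hP : ∀ i ∈ T, ∀ j ∈ T, i ≠ j → Far (v i) (v j) := (Finset.mem_filter.mp hT).2
  refine ⟨T, hP, ?_⟩
  have hcover : ∀ i : Fin (N + 1), ∃ j ∈ T, ¬ Far (v i) (v j) := by
    intro i
    by_contra hc
    push_neg at hc
    have hiT : i ∉ T := fun hi => far_irrefl (v i) (hc i hi)
    have hins : insert i T ∈ 𝒯 := by
      rw [h𝒯, Finset.mem_filter]
      refine ⟨Finset.mem_univ _, ?_⟩
      intro a ha b hb hab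
      rcases Finset.mem_insert.mp ha with rfl | ha'
      · rcases Finset.mem_insert.mp hb with rfl | hb'
        · exact absurd rfl hab
        · exact hc b hb'
      · rcases Finset.mem_insert.mp hb with rfl | hb'
        · exact far_symm (hc a ha')
        · exact hP a ha' b hb' hab
    have := hmax _ hins
    rw [Finset.card_insert_of_notMem hiT] at this
    omega
  have hsub : (Finset.univ : Finset (Fin (N + 1))) ⊆
      T.biUnion (fun j => Finset.univ.filter fun i => ¬ Far (v i) (v j)) := by
    intro i _
    obtain ⟨j, hj, hfar⟩ := hcover i
    exact Finset.mem_biUnion.mpr ⟨j, hj, Finset.mem_filter.mpr ⟨Finset.mem_univ i, hfar⟩⟩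
  have h1 := Finset.card_le_card hsub
  rw [Finset.card_univ, Fintype.card_fin] at h1
  refine h1.trans ?_
  refine (Finset.card_biUnion_le).trans ?_
  calc ∑ j ∈ T, (Finset.univ.filter fun i => ¬ Far (v i) (v j)).card
      ≤ ∑ _j ∈ T, 5 ^ (d + 1) := Finset.sum_le_sum fun j _ => card_near v hv (v j)
    _ = T.card * 5 ^ (d + 1) := by rw [Finset.sum_const, smul_eq_mul]

end NPaux
namespace NPaux

lemma real_ineq (d n : ℕ) :
    (2 * (d:ℝ) + 1) ^ n * ((4 * (d:ℝ) + 2) ^ (n + 1))⁻¹ ≤ (1 / 2 : ℝ) ^ n := by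
  have hb : (0:ℝ) < (4 * (d:ℝ) + 2) ^ (n + 1) := by positivity
  rw [← div_eq_mul_inv, div_le_iff₀ hb]
  have e : (1 / 2 : ℝ) ^ n * (4 * (d:ℝ) + 2) ^ (n + 1) = 2 * (2 * (d:ℝ) + 1) ^ (n + 1) := by
    rw [show (4 * (d:ℝ) + 2) = 2 * (2 * (d:ℝ) + 1) by ring, mul_pow, pow_succ]
    rw [show (1/2:ℝ)^n * (2 ^ n * 2 * (2 * (d:ℝ) + 1) ^ (n+1)) =
      ((1/2 * 2 : ℝ)) ^ n * (2 * (2 * (d:ℝ) + 1) ^ (n+1)) by rw [mul_pow]; ring]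
    norm_num
  rw [e]
  have hd0 : (0:ℝ) ≤ (d:ℝ) := Nat.cast_nonneg d
  have h1 : (2 * (d:ℝ) + 1) ^ n ≤ (2 * (d:ℝ) + 1) ^ (n + 1) :=
    pow_le_pow_right₀ (by linarith) (Nat.le_succ n)
  have h2 : (0:ℝ) ≤ (2 * (d:ℝ) + 1) ^ (n + 1) := by positivity
  linarith

lemma path_bound {Ω : Type*} [MeasurableSpace Ω] (P : Measure Ω) [IsProbabilityMeasure P]
    {d n : ℕ} (A : Site d → Set Ω)
    (hAprob : ∀ v, P (A v) ≤ ENNReal.ofReal (((4 * d + 2 : ℝ) ^ (5 ^ (d + 1)))⁻¹))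
    (h2dep : ∀ S : Finset (Site d),
      (∀ v ∈ S, ∀ w ∈ S, v ≠ w → Far v w) →
      iIndepSet (fun v : {x // x ∈ S} => A v.1) P)
    (v : Fin (n + 1) → Site d) (hv : Function.Injective v) :
    P (⋂ i, A (v i)) ≤ ENNReal.ofReal (((4 * d + 2 : ℝ) ^ (n + 1))⁻¹) := by
  classical
  obtain ⟨T, hTfar, hTcard⟩ := exists_sparse v hv
  set S : Finset (Site d) := T.image v with hS
  have hfarS : ∀ a ∈ S, ∀ b ∈ S, a ≠ b → Far a b := by
    intro a ha b hb hab
    rw [hS, Finset.mem_image] at ha hb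
    obtain ⟨i, hi, rfl⟩ := ha
    obtain ⟨j, hj, rfl⟩ := hb
    exact hTfar i hi j hj (fun h => hab (congrArg v h))
  have hprod := (h2dep S hfarS).meas_biInter Finset.univ
  have hsub : (⋂ i, A (v i)) ⊆ ⋂ x ∈ (Finset.univ : Finset {x // x ∈ S}), A x.1 := by
    intro ω hω
    rw [Set.mem_iInter₂]
    intro x _
    have hx : (x : Site d) ∈ T.image v := by rw [← hS]; exact x.2
    obtain ⟨i, _, hvi⟩ := Finset.mem_image.mp hx
    rw [← hvi]
    exact Set.mem_iInter.mp hω i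
  have hScard : S.card = T.card := Finset.card_image_of_injective T hv
  have hbase : (1:ℝ) ≤ 4 * (d:ℝ) + 2 := by
    have : (0:ℝ) ≤ (d:ℝ) := Nat.cast_nonneg d
    linarith
  calc P (⋂ i, A (v i))
      ≤ P (⋂ x ∈ (Finset.univ : Finset {x // x ∈ S}), A x.1) := measure_mono hsub
    _ = ∏ x ∈ (Finset.univ : Finset {x // x ∈ S}), P (A x.1) := hprod
    _ ≤ ∏ _x ∈ (Finset.univ : Finset {x // x ∈ S}),
          ENNReal.ofReal (((4 * d + 2 : ℝ) ^ (5 ^ (d + 1)))⁻¹) :=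
        Finset.prod_le_prod' fun x _ => hAprob x.1
    _ = ENNReal.ofReal (((4 * d + 2 : ℝ) ^ (5 ^ (d + 1)))⁻¹) ^ T.card := by
        rw [Finset.prod_const, Finset.card_univ, Fintype.card_coe, hScard]
    _ = ENNReal.ofReal ((((4 * d + 2 : ℝ) ^ (5 ^ (d + 1)))⁻¹) ^ T.card) := by
        rw [ENNReal.ofReal_pow (by positivity)]
    _ ≤ ENNReal.ofReal (((4 * d + 2 : ℝ) ^ (n + 1))⁻¹) := by
        apply ENNReal.ofReal_le_ofReal
        rw [inv_pow, ← pow_mul]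
        apply inv_anti₀ (by positivity)
        apply pow_le_pow_right₀ hbase
        calc n + 1 ≤ T.card * 5 ^ (d + 1) := hTcard
          _ = 5 ^ (d + 1) * T.card := mul_comm _ _

end NPaux


open NPaux

/-- Consider 2-dependent oriented site percolation on
`ℒ = ℤ^d × ℕ ⊆ ℤ^{d+1}` (directed edges `(m,n) → (m',n')` iff `‖m−m'‖₁ + |n−n'| = 1`
and `n ≤ n'`), given by events `A v` (`v` closed) with `P(A v) ≤ ε` where
`ε = (4d+2)^{−5^{d+1}}`, such that any subfamily indexed by sites pairwise at
`ℓ∞`-distance greater than `2` is mutually independent. Then for every `n ≥ 1`, the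
probability that some injective directed path of length `n` starting at the origin is
entirely closed is at most `(1/2)^n`. -/
theorem no_percolation_of_closed_sites
    {Ω : Type*} [MeasurableSpace Ω] (P : Measure Ω) [IsProbabilityMeasure P]
    (d : ℕ) (hd : 1 ≤ d)
    (A : (Fin d → ℤ) × ℕ → Set Ω) (hAmeas : ∀ v, MeasurableSet (A v))
    (hAprob : ∀ v, P (A v)
      ≤ ENNReal.ofReal (((4 * d + 2 : ℝ) ^ (5 ^ (d + 1)))⁻¹))
    (h2dep : ∀ S : Finset ((Fin d → ℤ) × ℕ),
      (∀ v ∈ S, ∀ w ∈ S, v ≠ w →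
        (∃ i, 2 < |v.1 i - w.1 i|) ∨ 2 < |(v.2 : ℤ) - (w.2 : ℤ)|) →
      iIndepSet (fun v : {x // x ∈ S} => A v.1) P)
    (n : ℕ) (hn : 1 ≤ n) :
    P {ω | ∃ v : Fin (n + 1) → (Fin d → ℤ) × ℕ,
        Function.Injective v ∧ v 0 = (0, 0) ∧
        (∀ i : Fin n,
          (∑ i', |(v i.castSucc).1 i' - (v i.succ).1 i'|)
              + |((v i.castSucc).2 : ℤ) - ((v i.succ).2 : ℤ)| = 1 ∧
          (v i.castSucc).2 ≤ (v i.succ).2) ∧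
        ∀ i, ω ∈ A (v i)}
      ≤ (1 / 2 : ℝ≥0∞) ^ n := by
  classical
  set Path : (Fin n → Move d) → Fin (n + 1) → Site d :=
    fun s i => pathAux (fun j => if h : j < n then s ⟨j, h⟩ else Sum.inr ()) i.val with hPath
  set F : Finset (Fin n → Move d) :=
    Finset.univ.filter (fun s => Function.Injective (Path s)) with hF
  set B : ℝ≥0∞ := ENNReal.ofReal (((4 * d + 2 : ℝ) ^ (n + 1))⁻¹) with hB
  have key : P {ω | ∃ v : Fin (n + 1) → (Fin d → ℤ) × ℕ,
        Function.Injective v ∧ v 0 = (0, 0) ∧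
        (∀ i : Fin n,
          (∑ i', |(v i.castSucc).1 i' - (v i.succ).1 i'|)
              + |((v i.castSucc).2 : ℤ) - ((v i.succ).2 : ℤ)| = 1 ∧
          (v i.castSucc).2 ≤ (v i.succ).2) ∧
        ∀ i, ω ∈ A (v i)}
      ≤ ∑ s ∈ F, P (⋂ i, A (Path s i)) := by
    refine le_trans (measure_mono ?_) (measure_biUnion_finset_le F _)
    intro ω hω
    simp only [Set.mem_setOf_eq] at hω
    obtain ⟨v, hinj, h0, hstep, hclosed⟩ := hω
    obtain ⟨s, hs⟩ := exists_moves v h0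
      (fun i => exists_move _ _ (hstep i).1 (hstep i).2)
    have hveq : Path s = v := funext hs
    refine Set.mem_iUnion₂.mpr ⟨s, ?_, ?_⟩
    · rw [hF, Finset.mem_filter]
      exact ⟨Finset.mem_univ _, by rw [hveq]; exact hinj⟩
    · exact Set.mem_iInter.mpr fun i => by rw [hveq]; exact hclosed i
  have hFcard : F.card ≤ (2 * d + 1) ^ n := by
    have h1 : F.card ≤ (Finset.univ : Finset (Fin n → Move d)).card :=
      Finset.card_le_card (Finset.filter_subset _ _)
    have h2 : (Finset.univ : Finset (Fin n → Move d)).card = (2 * d + 1) ^ n := by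
      rw [Finset.card_univ, Fintype.card_fun, Fintype.card_fin]
      have hm : Fintype.card (Move d) = 2 * d + 1 := by
        simp [Move]
        omega
      rw [hm]
    omega
  refine key.trans ?_
  calc ∑ s ∈ F, P (⋂ i, A (Path s i))
      ≤ ∑ _s ∈ F, B := by
        refine Finset.sum_le_sum fun s hsF => ?_
        exact path_bound P A hAprob h2dep (Path s) ((Finset.mem_filter.mp hsF).2)
    _ = F.card • B := Finset.sum_const B
    _ = (F.card : ℝ≥0∞) * B := nsmul_eq_mul _ _
    _ ≤ (((2 * d + 1) ^ n : ℕ) : ℝ≥0∞) * B :=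
        mul_le_mul_left (by exact_mod_cast hFcard) B
    _ = ENNReal.ofReal ((((2 * d + 1) ^ n : ℕ) : ℝ) * ((4 * (d:ℝ) + 2) ^ (n + 1))⁻¹) := by
        rw [ENNReal.ofReal_mul (by positivity), ENNReal.ofReal_natCast, hB]
    _ ≤ ENNReal.ofReal ((1 / 2 : ℝ) ^ n) := by
        apply ENNReal.ofReal_le_ofReal
        push_cast
        exact real_ineq d n
    _ = (1 / 2 : ℝ≥0∞) ^ n := by
        rw [ENNReal.ofReal_pow (by norm_num)]
        congr 1
        rw [one_div, ENNReal.ofReal_inv_of_pos (by norm_num), ENNReal.ofReal_ofNat]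
        norm_num
end
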